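/- arXiv:2506.15250 — 3 statements merged into one kernel-verified Lean document; each statement's English description precedes it below -/
import Mathlib

section
/- Let G be a finite A-group that is an internal semidirect product G = F ⋊ T, where F = F(G) is the Fitting subgroup of G and T is a complement. Then for every y ∈ T, F is the internal direct product F = C_F(y) × [F, y] of the fixed points of y on F and the commutator subgroup [F, y]. -/
/-!
Common definitions: the set `N(G)` of conjugacy class sizes, `A`-groups,
the largest `p`-power `|G||_p` dividing an element of `N(G)`, the Fitting subgroup,
and the natural conjugation action of `G ⧸ H` on an abelian normal subgroup `H`
(used to form the semidirect product `H ⋊ G/H`).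
-/

/-- `N(G)`: the set of conjugacy class sizes (indices of centralizers) of `G`. -/
def indexSet (G : Type*) [Group G] : Set ℕ :=
  {n | ∃ x : G, n = (Subgroup.centralizer {x}).index}

/-- A finite group is an `A`-group if all its Sylow subgroups are abelian. -/
def IsAGroup (G : Type*) [Group G] : Prop :=
  ∀ (p : ℕ), p.Prime → ∀ P : Sylow p G, ∀ a b : (P : Subgroup G), a * b = b * a

/-- `|G||_p`: the highest power of `p` dividing some element of `N(G)`. -/
noncomputable def maxPPart (G : Type*) [Group G] (p : ℕ) : ℕ :=
  sSup {m | (∃ k : ℕ, m = p ^ k) ∧ ∃ n ∈ indexSet G, m ∣ n}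

open scoped Classical in
/-- The natural action of `G ⧸ H` on an abelian normal subgroup `H`, induced by
conjugation (`h ↦ g * h * g⁻¹`); it is used to form the semidirect product `H ⋊ G/H`.
(Junk value — the trivial action — if `H` is not abelian; see `quotConj_eq` below.) -/
noncomputable def quotConj (G : Type*) [Group G] (H : Subgroup G) [H.Normal] :
    G ⧸ H →* MulAut ↥H :=
  if h : H ≤ (MulAut.conjNormal (H := H)).ker then
    QuotientGroup.lift H MulAut.conjNormal h
  else 1

/-- When `H` is abelian, `quotConj` is indeed the conjugation action `h ↦ g * h * g⁻¹`. -/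
theorem quotConj_eq (G : Type*) [Group G] (H : Subgroup G) [H.Normal]
    (hab : ∀ a b : ↥H, a * b = b * a) (g : G) :
    quotConj G H (g : G ⧸ H) = MulAut.conjNormal g := by
  have hker : H ≤ (MulAut.conjNormal (H := H)).ker := by
    intro x hx
    rw [MonoidHom.mem_ker]
    ext y
    have h2 : x * (y : G) = (y : G) * x := congrArg Subtype.val (hab ⟨x, hx⟩ y)
    simp only [MulAut.conjNormal_apply, MulAut.one_apply]
    rw [mul_inv_eq_iff_eq_mul]
    exact h2
  rw [quotConj, dif_pos hker]
  rfl

/-- The Fitting subgroup: the join of all normal nilpotent subgroups. -/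
def fitting (G : Type*) [Group G] : Subgroup G :=
  ⨆ H ∈ {H : Subgroup G | H.Normal ∧ Group.IsNilpotent ↥H}, H

instance fitting_normal (G : Type*) [Group G] : (fitting G).Normal := by
  constructor
  intro n hn g
  rw [fitting, iSup_subtype'] at hn ⊢
  refine Subgroup.iSup_induction _
    (C := fun x => g * x * g⁻¹ ∈
      ⨆ H : {H : Subgroup G | H.Normal ∧ Group.IsNilpotent ↥H}, (H : Subgroup G))
    hn (fun H x hx => ?_) ?_ (fun x y hx hy => ?_)
  · exact Subgroup.mem_iSup_of_mem H (H.2.1.conj_mem x hx g)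
  · simpa using Subgroup.one_mem _
  · have h2 := Subgroup.mul_mem _ hx hy
    have h3 : g * (x * y) * g⁻¹ = (g * x * g⁻¹) * (g * y * g⁻¹) := by group
    show g * (x * y) * g⁻¹ ∈ _
    rwa [h3]

namespace Stmt12Aux

variable {G : Type*} [Group G]

/-- `x` is a `p`-element. -/
def Pel (p : ℕ) (x : G) : Prop := ∃ k : ℕ, x ^ p ^ k = 1

lemma pel_one (p : ℕ) : Pel p (1 : G) := ⟨0, one_pow _⟩

lemma pel_conj {p : ℕ} {x : G} (h : Pel p x) (g : G) : Pel p (g * x * g⁻¹) := by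
  obtain ⟨k, hk⟩ := h
  exact ⟨k, by rw [conj_pow, hk, mul_one, mul_inv_cancel]⟩

lemma pel_inv {p : ℕ} {x : G} (h : Pel p x) : Pel p x⁻¹ := by
  obtain ⟨k, hk⟩ := h
  exact ⟨k, by rw [inv_pow, hk, inv_one]⟩

lemma pel_mul {p : ℕ} {x y : G} (hc : x * y = y * x) (hx : Pel p x) (hy : Pel p y) :
    Pel p (x * y) := by
  obtain ⟨k, hk⟩ := hx
  obtain ⟨l, hl⟩ := hy
  refine ⟨k + l, ?_⟩
  rw [(Commute.mul_pow hc _ : (x * y) ^ p ^ (k + l) = _)]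
  rw [pow_add, pow_mul, hk, one_pow, one_mul, mul_comm (p ^ k), pow_mul, hl, one_pow]

lemma pel_zpow {p : ℕ} {x : G} (h : Pel p x) (i : ℤ) : Pel p (x ^ i) := by
  obtain ⟨k, hk⟩ := h
  refine ⟨k, ?_⟩
  rw [← zpow_natCast (x ^ i), ← zpow_mul, mul_comm, zpow_mul, zpow_natCast, hk, one_zpow]

lemma pel_eq_one {p : ℕ} (hp : p.Prime) {x : G} (h : Pel p x) {n : ℕ}
    (hxn : x ^ n = 1) (hpn : ¬ p ∣ n) : x = 1 := by
  obtain ⟨k, hk⟩ := h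
  have h1 : orderOf x ∣ p ^ k := orderOf_dvd_of_pow_eq_one hk
  have h2 : orderOf x ∣ n := orderOf_dvd_of_pow_eq_one hxn
  obtain ⟨l, hl, hor⟩ := (Nat.dvd_prime_pow hp).mp h1
  rcases Nat.eq_zero_or_pos l with hl0 | hl0
  · rw [hl0, pow_zero] at hor
    exact orderOf_eq_one_iff.mp hor
  · have hpn' : p ∣ n := dvd_trans (by rw [hor]; exact dvd_pow_self p hl0.ne') h2
    exact absurd hpn' hpn

variable [Finite G]

/-- Decomposition of an element into its `p`-part and `p'`-part. -/
lemma decomp (p : ℕ) (hp : p.Prime) (x : G) :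
    ∃ i j : ℤ, x = x ^ i * x ^ j ∧ Pel p (x ^ i) ∧
      orderOf (x ^ j) ∣ ordCompl[p] (orderOf x) := by
  have hn : orderOf x ≠ 0 := (orderOf_pos x).ne'
  have hqm : p ^ (orderOf x).factorization p * ordCompl[p] (orderOf x) = orderOf x :=
    Nat.ordProj_mul_ordCompl_eq_self (orderOf x) p
  have hqmz : ((p ^ (orderOf x).factorization p : ℕ) : ℤ) * ((ordCompl[p] (orderOf x) : ℕ) : ℤ)
      = ((orderOf x : ℕ) : ℤ) := by exact_mod_cast congrArg (Nat.cast (R := ℤ)) hqm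
  have hco : Nat.Coprime (p ^ (orderOf x).factorization p) (ordCompl[p] (orderOf x)) :=
    Nat.Coprime.pow_left _ (Nat.coprime_ordCompl hp hn)
  obtain ⟨t, ht1, ht0⟩ := Nat.chineseRemainder hco 1 0
  have hmt : ((ordCompl[p] (orderOf x) : ℕ) : ℤ) ∣ (t : ℤ) :=
    Int.natCast_dvd_natCast.mpr (Nat.modEq_zero_iff_dvd.mp ht0)
  have hqt : ((p ^ (orderOf x).factorization p : ℕ) : ℤ) ∣ 1 - (t : ℤ) := by
    exact_mod_cast ht1.dvd
  refine ⟨(t : ℤ), 1 - (t : ℤ), ?_, ⟨(orderOf x).factorization p, ?_⟩, ?_⟩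
  · rw [← zpow_add]
    norm_num
  · rw [← zpow_natCast (x ^ (t : ℤ)), ← zpow_mul, ← orderOf_dvd_iff_zpow_eq_one]
    obtain ⟨s, hs⟩ := hmt
    refine ⟨s, ?_⟩
    rw [hs, ← hqmz]
    push_cast
    ring
  · rw [orderOf_dvd_iff_pow_eq_one, ← zpow_natCast (x ^ (1 - (t : ℤ))), ← zpow_mul,
      ← orderOf_dvd_iff_zpow_eq_one]
    obtain ⟨s, hs⟩ := hqt
    refine ⟨s, ?_⟩
    rw [hs, ← hqmz]
    push_cast
    ring

/-- In an `A`-group, any `p`-subgroup is "abelian". -/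
lemma pgroup_comm (hA : IsAGroup G) {p : ℕ} (hp : p.Prime) {H : Subgroup G}
    (h : IsPGroup p H) {a b : G} (ha : a ∈ H) (hb : b ∈ H) : a * b = b * a := by
  haveI : Fact p.Prime := ⟨hp⟩
  obtain ⟨P, hle⟩ := h.exists_le_sylow
  have := hA p hp P ⟨a, hle ha⟩ ⟨b, hle hb⟩
  exact congrArg Subtype.val this

/-- Elements of normal `p`- and `q`-subgroups commute in an `A`-group. -/
lemma comm_of_normal_pq (hA : IsAGroup G) {p q : ℕ} (hp : p.Prime) (hq : q.Prime)
    {M N : Subgroup G} (hMn : M.Normal) (hNn : N.Normal) (hM : IsPGroup p M)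
    (hN : IsPGroup q N) {x z : G} (hx : x ∈ M) (hz : z ∈ N) : x * z = z * x := by
  by_cases hpq : p = q
  · subst hpq
    haveI := hNn
    have hK : IsPGroup p (M ⊔ N : Subgroup G) := IsPGroup.to_sup_of_normal_right hM hN
    exact pgroup_comm hA hp hK (le_sup_left (α := Subgroup G) hx)
      (le_sup_right (α := Subgroup G) hz)
  · have h1 : x * z * x⁻¹ * z⁻¹ ∈ N :=
      N.mul_mem (hNn.conj_mem z hz x) (N.inv_mem hz)
    have h2 : x * z * x⁻¹ * z⁻¹ ∈ M := by
      have : x * (z * x⁻¹ * z⁻¹) ∈ M := M.mul_mem hx (hMn.conj_mem x⁻¹ (M.inv_mem hx) z)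
      have he : x * z * x⁻¹ * z⁻¹ = x * (z * x⁻¹ * z⁻¹) := by group
      rwa [he]
    set w := x * z * x⁻¹ * z⁻¹ with hw
    obtain ⟨km, hkm⟩ := hM ⟨w, h2⟩
    obtain ⟨kn, hkn⟩ := hN ⟨w, h1⟩
    have hwm : w ^ p ^ km = 1 := by
      have := congrArg Subtype.val hkm
      simpa using this
    have hwn : w ^ q ^ kn = 1 := by
      have := congrArg Subtype.val hkn
      simpa using this
    have hd1 : orderOf w ∣ p ^ km := orderOf_dvd_of_pow_eq_one hwm
    have hd2 : orderOf w ∣ q ^ kn := orderOf_dvd_of_pow_eq_one hwn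
    have hcop : Nat.Coprime (p ^ km) (q ^ kn) :=
      Nat.Coprime.pow _ _ ((Nat.coprime_primes hp hq).mpr hpq)
    have : orderOf w = 1 := Nat.eq_one_of_dvd_coprimes hcop hd1 hd2
    have hw1 : w = 1 := orderOf_eq_one_iff.mp this
    have : x * z * x⁻¹ * z⁻¹ = 1 := hw1
    calc x * z = (x * z * x⁻¹ * z⁻¹) * (z * x) := by group
    _ = z * x := by rw [this, one_mul]

/-- Reduction of commutation to prime-power-order parts. -/
lemma commute_reduction {y : G} : ∀ n : ℕ, ∀ x : G, orderOf x ≤ n →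
    (∀ p : ℕ, p.Prime → ∀ z : G, (∃ i : ℤ, z = x ^ i) → Pel p z → z * y = y * z) →
    x * y = y * x := by
  intro n
  induction n with
  | zero => intro x hx _; exact absurd hx (by simpa using (orderOf_pos x).ne')
  | succ n ih =>
    intro x hx h
    by_cases h1 : orderOf x = 1
    · rw [orderOf_eq_one_iff.mp h1, one_mul, mul_one]
    · obtain ⟨p, hp, hpd⟩ := Nat.exists_prime_and_dvd h1
      obtain ⟨i, j, hxij, hpel, hdvd⟩ := decomp p hp x
      have hxiy : x ^ i * y = y * x ^ i := h p hp _ ⟨i, rfl⟩ hpel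
      have hordm : ordCompl[p] (orderOf x) < orderOf x := by
        have h0 : 0 < orderOf x := orderOf_pos x
        have hd : ordCompl[p] (orderOf x) ∣ orderOf x := Nat.ordCompl_dvd (orderOf x) p
        have hne2 : ordCompl[p] (orderOf x) ≠ orderOf x := by
          intro he
          exact Nat.not_dvd_ordCompl hp h0.ne' (by rw [he]; exact hpd)
        exact lt_of_le_of_ne (Nat.le_of_dvd h0 hd) hne2
      have hxj_le : orderOf (x ^ j) ≤ n := by
        have h2 : orderOf (x ^ j) ≤ ordCompl[p] (orderOf x) :=
          Nat.le_of_dvd (Nat.ordCompl_pos p (orderOf_pos x).ne') hdvd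
        omega
      have hxjy : x ^ j * y = y * x ^ j := by
        refine ih (x ^ j) hxj_le ?_
        intro p' hp' z hz hzp
        obtain ⟨i', hi'⟩ := hz
        refine h p' hp' z ⟨j * i', ?_⟩ hzp
        rw [hi', zpow_mul]
      calc x * y = x ^ i * (x ^ j * y) := by rw [← mul_assoc, ← hxij]
      _ = x ^ i * (y * x ^ j) := by rw [hxjy]
      _ = (x ^ i * y) * x ^ j := by rw [mul_assoc]
      _ = y * (x ^ i * x ^ j) := by rw [hxiy, mul_assoc]
      _ = y * x := by rw [← hxij]

/-- The `p`-torsion subgroup of an "abelian" subgroup. -/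
def pTor (p : ℕ) (A : Subgroup G) (h : ∀ a ∈ A, ∀ b ∈ A, a * b = b * a) : Subgroup G where
  carrier := {g | g ∈ A ∧ Pel p g}
  one_mem' := ⟨A.one_mem, pel_one p⟩
  mul_mem' := by
    rintro a b ⟨haA, hpa⟩ ⟨hbA, hpb⟩
    exact ⟨A.mul_mem haA hbA, pel_mul (h a haA b hbA) hpa hpb⟩
  inv_mem' := by
    rintro a ⟨haA, hpa⟩
    exact ⟨A.inv_mem haA, pel_inv hpa⟩

lemma pTor_normal (p : ℕ) {A : Subgroup G} (hAn : A.Normal)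
    (h : ∀ a ∈ A, ∀ b ∈ A, a * b = b * a) : (pTor p A h).Normal := by
  constructor
  rintro a ⟨haA, hpa⟩ g
  exact ⟨hAn.conj_mem a haA g, pel_conj hpa g⟩

lemma pTor_isPGroup (p : ℕ) {A : Subgroup G} (h : ∀ a ∈ A, ∀ b ∈ A, a * b = b * a) :
    IsPGroup p (pTor p A h) := by
  rintro ⟨g, hgA, k, hk⟩
  exact ⟨k, Subtype.ext (by rw [SubmonoidClass.coe_pow]; exact hk)⟩

lemma zpowers_isPGroup {p : ℕ} {c : G} (hc : Pel p c) : IsPGroup p (Subgroup.zpowers c) := by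
  rintro ⟨g, hg⟩
  obtain ⟨m, rfl⟩ := Subgroup.mem_zpowers_iff.mp hg
  obtain ⟨k, hk⟩ := pel_zpow hc m
  exact ⟨k, Subtype.ext (by rw [SubmonoidClass.coe_pow]; exact hk)⟩

/-- A `p`-element commutes with every `p`-element of a normal "abelian" subgroup. -/
lemma pel_comm_pel_of_normal (hA : IsAGroup G) {F : Subgroup G} (hFn : F.Normal)
    (hFc : ∀ a ∈ F, ∀ b ∈ F, a * b = b * a) {p : ℕ} (hp : p.Prime) {c w : G}
    (hc : Pel p c) (hw : w ∈ F) (hpw : Pel p w) : c * w = w * c := by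
  haveI := pTor_normal p hFn hFc
  have hK : IsPGroup p (Subgroup.zpowers c ⊔ pTor p F hFc : Subgroup G) :=
    IsPGroup.to_sup_of_normal_right (zpowers_isPGroup hc) (pTor_isPGroup p hFc)
  exact pgroup_comm hA hp hK
    (le_sup_left (α := Subgroup G) (Subgroup.mem_zpowers c))
    (le_sup_right (α := Subgroup G) (⟨hw, hpw⟩ : w ∈ pTor p F hFc))

/-- Cross-commutation between two normal "abelian" subgroups of an `A`-group. -/
lemma cross_comm (hA : IsAGroup G) {A B : Subgroup G} (hAn : A.Normal) (hBn : B.Normal)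
    (hAab : ∀ a ∈ A, ∀ b ∈ A, a * b = b * a) (hBab : ∀ a ∈ B, ∀ b ∈ B, a * b = b * a) :
    ∀ x ∈ A, ∀ z ∈ B, x * z = z * x := by
  intro x hx z hz
  refine commute_reduction (orderOf x) x le_rfl ?_
  intro p hp u hu hpu
  obtain ⟨i, hi⟩ := hu
  have huA : u ∈ A := by rw [hi]; exact Subgroup.zpow_mem A hx i
  refine (commute_reduction (orderOf z) z le_rfl ?_).symm
  intro q hq w hw hqw
  obtain ⟨j, hj⟩ := hw
  have hwB : w ∈ B := by rw [hj]; exact Subgroup.zpow_mem B hz j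
  haveI := pTor_normal q hBn hBab
  haveI := pTor_normal p hAn hAab
  exact comm_of_normal_pq hA hq hp (pTor_normal q hBn hBab) (pTor_normal p hAn hAab)
    (pTor_isPGroup q hBab) (pTor_isPGroup p hAab)
    (⟨hwB, hqw⟩ : w ∈ pTor q B hBab) (⟨huA, hpu⟩ : u ∈ pTor p A hAab)

/-- A normal nilpotent subgroup of a finite `A`-group is "abelian". -/
lemma nilpotent_normal_comm (hA : IsAGroup G) (H : Subgroup G) (hn : H.Normal)
    (hnil : Group.IsNilpotent ↥H) : ∀ a ∈ H, ∀ b ∈ H, a * b = b * a := by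
  haveI := hn
  have hSyl : ∀ (p : ℕ), Fact p.Prime → ∀ P : Sylow p ↥H, (P : Subgroup ↥H).Normal :=
    ((isNilpotent_of_finite_tfae (G := ↥H)).out 0 3).mp hnil
  -- For a p-element a ∈ H, produce a normal-in-G p-subgroup containing a.
  have hfind : ∀ (p : ℕ), p.Prime → ∀ a ∈ H, Pel p a →
      ∃ M : Subgroup G, M.Normal ∧ IsPGroup p M ∧ a ∈ M := by
    intro p hp a haH hpa
    haveI : Fact p.Prime := ⟨hp⟩
    set a' : ↥H := ⟨a, haH⟩ with ha'
    have hpa' : Pel p a' := by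
      obtain ⟨k, hk⟩ := hpa
      exact ⟨k, Subtype.ext (by rw [SubmonoidClass.coe_pow]; exact hk)⟩
    obtain ⟨P, hle⟩ := (zpowers_isPGroup hpa').exists_le_sylow
    have hPn : (P : Subgroup ↥H).Normal := hSyl p ⟨hp⟩ P
    have hchar : (P : Subgroup ↥H).Characteristic := Sylow.characteristic_of_normal P hPn
    refine ⟨Subgroup.map H.subtype (P : Subgroup ↥H), ?_, ?_, ?_⟩
    · constructor
      intro x hx g
      obtain ⟨h', hh', rfl⟩ := Subgroup.mem_map.mp hx
      have hmaple := Subgroup.characteristic_iff_map_le.mp hchar (MulAut.conjNormal g)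
      have hmem : (MulAut.conjNormal g) h' ∈ (P : Subgroup ↥H) :=
        hmaple (Subgroup.mem_map.mpr ⟨h', hh', rfl⟩)
      refine Subgroup.mem_map.mpr ⟨(MulAut.conjNormal g) h', hmem, ?_⟩
      simp [MulAut.conjNormal_apply]
    · exact P.isPGroup'.map H.subtype
    · exact Subgroup.mem_map.mpr ⟨a', hle (Subgroup.mem_zpowers a'), rfl⟩
  intro a haH b hbH
  refine commute_reduction (orderOf a) a le_rfl ?_
  intro p hp u hu hpu
  obtain ⟨i, hi⟩ := hu
  have huH : u ∈ H := by rw [hi]; exact Subgroup.zpow_mem H haH i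
  refine (commute_reduction (orderOf b) b le_rfl ?_).symm
  intro q hq w hw hqw
  obtain ⟨j, hj⟩ := hw
  have hwH : w ∈ H := by rw [hj]; exact Subgroup.zpow_mem H hbH j
  obtain ⟨M, hMn, hMp, huM⟩ := hfind p hp u huH hpu
  obtain ⟨N, hNn, hNq, hwN⟩ := hfind q hq w hwH hqw
  exact comm_of_normal_pq hA hq hp hNn hMn hNq hMp hwN huM

open scoped Pointwise in
/-- The Fitting subgroup of a finite `A`-group is "abelian". -/
lemma fitting_comm (hA : IsAGroup G) : ∀ a ∈ fitting G, ∀ b ∈ fitting G, a * b = b * a := by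
  set S := {H : Subgroup G | H.Normal ∧ Group.IsNilpotent ↥H} with hS
  have hbot : (⊥ : Subgroup G) ∈ S := by
    constructor
    · infer_instance
    · haveI : Subsingleton (↥(⊥ : Subgroup G)) := by
        constructor; rintro ⟨a, ha⟩ ⟨b, hb⟩
        simp only [Subgroup.mem_bot] at ha hb
        subst ha; subst hb; rfl
      infer_instance
  haveI : Nonempty S := ⟨⟨⊥, hbot⟩⟩
  have hdir : Directed (· ≤ ·) (fun H : S => (H : Subgroup G)) := by
    rintro ⟨H1, h1n, h1nil⟩ ⟨H2, h2n, h2nil⟩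
    haveI := h1n; haveI := h2n
    have h1c := nilpotent_normal_comm hA H1 h1n h1nil
    have h2c := nilpotent_normal_comm hA H2 h2n h2nil
    have hcross := cross_comm hA h1n h2n h1c h2c
    have hsupc : ∀ x ∈ H1 ⊔ H2, ∀ z ∈ H1 ⊔ H2, x * z = z * x := by
      have hset : ((H1 ⊔ H2 : Subgroup G) : Set G) = (H1 : Set G) * (H2 : Set G) :=
        Subgroup.normal_mul H1 H2
      intro x hx z hz
      have hx' : x ∈ (H1 : Set G) * (H2 : Set G) := hset ▸ hx
      have hz' : z ∈ (H1 : Set G) * (H2 : Set G) := hset ▸ hz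
      obtain ⟨a1, ha1, b1, hb1, rfl⟩ := hx'
      obtain ⟨a2, ha2, b2, hb2, rfl⟩ := hz'
      have c1 : b1 * a2 = a2 * b1 := (hcross a2 ha2 b1 hb1).symm
      have c2 : b1 * b2 = b2 * b1 := h2c b1 hb1 b2 hb2
      have c3 : a1 * a2 = a2 * a1 := h1c a1 ha1 a2 ha2
      have c4 : b2 * a1 = a1 * b2 := (hcross a1 ha1 b2 hb2).symm
      calc a1 * b1 * (a2 * b2) = a1 * (b1 * a2) * b2 := by group
      _ = a1 * (a2 * b1) * b2 := by rw [c1]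
      _ = (a1 * a2) * (b1 * b2) := by group
      _ = (a2 * a1) * (b2 * b1) := by rw [c2, c3]
      _ = a2 * (a1 * b2) * b1 := by group
      _ = a2 * (b2 * a1) * b1 := by rw [c4]
      _ = a2 * b2 * (a1 * b1) := by group
    have hnil : Group.IsNilpotent ↥(H1 ⊔ H2 : Subgroup G) := by
      letI : CommGroup ↥(H1 ⊔ H2 : Subgroup G) :=
        { (inferInstance : Group ↥(H1 ⊔ H2 : Subgroup G)) with
          mul_comm := fun a b => Subtype.ext (hsupc a a.2 b b.2) }
      infer_instance
    exact ⟨⟨H1 ⊔ H2, ⟨inferInstance, hnil⟩⟩, le_sup_left, le_sup_right⟩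
  intro a ha b hb
  have hmem : ∀ x : G, x ∈ fitting G ↔ ∃ H : S, x ∈ (H : Subgroup G) := by
    intro x
    rw [fitting, iSup_subtype']
    exact Subgroup.mem_iSup_of_directed hdir
  obtain ⟨⟨H1, h1⟩, ha1⟩ := (hmem a).mp ha
  obtain ⟨⟨H2, h2⟩, hb2⟩ := (hmem b).mp hb
  obtain ⟨⟨K, hKn, hKnil⟩, hle1, hle2⟩ := hdir ⟨H1, h1⟩ ⟨H2, h2⟩
  exact nilpotent_normal_comm hA K hKn hKnil a (hle1 ha1) b (hle2 hb2)

/-- The commutator-with-`y` map on a normal "abelian" subgroup, as a homomorphism to `G`. -/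
def phi (F : Subgroup G) (hFn : F.Normal) (hFc : ∀ a ∈ F, ∀ b ∈ F, a * b = b * a)
    (y : G) : ↥F →* G where
  toFun a := (a : G) * (y * (a : G)⁻¹ * y⁻¹)
  map_one' := by simp
  map_mul' a b := by
    have hca : y * (a : G)⁻¹ * y⁻¹ ∈ F := hFn.conj_mem _ (F.inv_mem a.2) y
    have hcb : y * (b : G)⁻¹ * y⁻¹ ∈ F := hFn.conj_mem _ (F.inv_mem b.2) y
    have h1 : ((a * b : ↥F) : G) = (a : G) * (b : G) := rfl
    set A := (a : G); set B := (b : G)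
    set CA := y * A⁻¹ * y⁻¹; set CB := y * B⁻¹ * y⁻¹
    have hkey : y * (A * B)⁻¹ * y⁻¹ = CB * CA := by
      simp only [CA, CB]; group
    have c1 : B * CA = CA * B := hFc B b.2 CA hca
    have c2 : CB * CA = CA * CB := hFc CB hcb CA hca
    calc ((a * b : ↥F) : G) * (y * ((a * b : ↥F) : G)⁻¹ * y⁻¹)
        = A * B * (y * (A * B)⁻¹ * y⁻¹) := by rw [h1]
    _ = A * (B * (CB * CA)) := by rw [hkey]; group
    _ = A * (B * (CA * CB)) := by rw [c2]
    _ = A * (B * CA * CB) := by rw [mul_assoc B]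
    _ = A * (CA * B * CB) := by rw [c1]
    _ = (A * CA) * (B * CB) := by group

lemma phi_mem {F : Subgroup G} (hFn : F.Normal) (hFc : ∀ a ∈ F, ∀ b ∈ F, a * b = b * a)
    (y : G) (a : ↥F) : phi F hFn hFc y a ∈ F :=
  F.mul_mem a.2 (hFn.conj_mem _ (F.inv_mem a.2) y)

/-- The key lemma: an element of `[F, y]` fixed by `y` is trivial. -/
lemma key (hA : IsAGroup G) (F : Subgroup G) (hFn : F.Normal)
    (hFc : ∀ a ∈ F, ∀ b ∈ F, a * b = b * a) (y : G) (z : G) (hzF : z ∈ F)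
    (hzy : y * z * y⁻¹ = z) (f : ↥F) (hzf : z = phi F hFn hFc y f) : z = 1 := by
  by_contra hne
  have hord : orderOf z ≠ 1 := fun h => hne (orderOf_eq_one_iff.mp h)
  obtain ⟨p, hp, hpd⟩ := Nat.exists_prime_and_dvd hord
  obtain ⟨i, j, hzij, hpel, hdvd⟩ := decomp p hp z
  suffices hzi : z ^ i = 1 by
    have hzz : z = z ^ j := by conv_lhs => rw [hzij, hzi, one_mul]
    have h7 : orderOf z = orderOf (z ^ j) := congrArg orderOf hzz
    exact Nat.not_dvd_ordCompl hp (orderOf_pos z).ne'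
      (hpd.trans ((dvd_of_eq h7).trans hdvd))
  -- zi := z ^ i is a p-element of F fixed by y
  set φ := phi F hFn hFc y with hφ
  set zi := z ^ i with hzi_def
  have hziF : zi ∈ F := Subgroup.zpow_mem F hzF i
  have hziy : y * zi * y⁻¹ = zi := by
    rw [hzi_def, ← conj_zpow, hzy]
  -- Step: zi = φ (u0) where u0 = f ^ i
  have hz_eq : z = φ f := hzf
  have hzi_eq : zi = φ (f ^ i) := by
    rw [map_zpow, ← hz_eq, ← hzi_def]
  set u0 : ↥F := f ^ i with hu0
  -- decompose u0 in G
  obtain ⟨i', j', hu0ij, hpelu, hdvdu⟩ := decomp p hp ((u0 : G))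
  have hcoe1 : ((u0 ^ i' : ↥F) : G) = (u0 : G) ^ i' := by
    rw [SubgroupClass.coe_zpow]
  have hcoe2 : ((u0 ^ j' : ↥F) : G) = (u0 : G) ^ j' := by
    rw [SubgroupClass.coe_zpow]
  have hu0split : u0 = u0 ^ i' * u0 ^ j' := by
    apply Subtype.ext
    rw [Subgroup.coe_mul, hcoe1, hcoe2]
    exact hu0ij
  set U := φ (u0 ^ i') with hU
  set V := φ (u0 ^ j') with hV
  have hUF : U ∈ F := phi_mem hFn hFc y _
  have hVF : V ∈ F := phi_mem hFn hFc y _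
  have hziUV : zi = U * V := by rw [hzi_eq, hu0split, map_mul, ← hU, ← hV]
  set u : G := (u0 : G) ^ i' with hu_def
  have huF : u ∈ F := Subgroup.zpow_mem F u0.2 i'
  have hpu : Pel p u := by rw [hu_def]; exact hpelu
  -- U = u * (y * u⁻¹ * y⁻¹) is a p-element
  have hU_eq : U = u * (y * u⁻¹ * y⁻¹) := by
    rw [hU, hφ]
    show ((u0 ^ i' : ↥F) : G) * (y * ((u0 ^ i' : ↥F) : G)⁻¹ * y⁻¹) = _
    rw [hcoe1]
  have hpcU : Pel p (y * u⁻¹ * y⁻¹) := pel_conj (pel_inv hpu) y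
  have hcuF : y * u⁻¹ * y⁻¹ ∈ F := hFn.conj_mem _ (F.inv_mem huF) y
  have hpU : Pel p U := by
    rw [hU_eq]
    exact pel_mul (hFc u huF _ hcuF) hpu hpcU
  -- V has order coprime to p
  set v : G := (u0 : G) ^ j' with hv_def
  have hvF : v ∈ F := Subgroup.zpow_mem F u0.2 j'
  have hV_eq : V = v * (y * v⁻¹ * y⁻¹) := by
    rw [hV, hφ]
    show ((u0 ^ j' : ↥F) : G) * (y * ((u0 ^ j' : ↥F) : G)⁻¹ * y⁻¹) = _
    rw [hcoe2]
  have hcvF : y * v⁻¹ * y⁻¹ ∈ F := hFn.conj_mem _ (F.inv_mem hvF) y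
  have hVpow : V ^ orderOf v = 1 := by
    rw [hV_eq, Commute.mul_pow (hFc v hvF _ hcvF), pow_orderOf_eq_one, one_mul,
      conj_pow, inv_pow, pow_orderOf_eq_one, inv_one, mul_one, mul_inv_cancel]
  have hVord : orderOf V ∣ orderOf v := orderOf_dvd_of_pow_eq_one hVpow
  have hpv : ¬ p ∣ orderOf V := by
    intro hdvdp
    exact Nat.not_dvd_ordCompl hp (orderOf_pos ((u0 : G))).ne'
      (dvd_trans hdvdp (dvd_trans hVord hdvdu))
  -- V is also a p-element, hence V = 1
  have hpV : Pel p V := by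
    have hVeq2 : V = U⁻¹ * zi := by rw [hziUV]; group
    rw [hVeq2]
    exact pel_mul (hFc U⁻¹ (F.inv_mem hUF) zi hziF) (pel_inv hpU) hpel
  have hV1 : V = 1 := pel_eq_one hp hpV (pow_orderOf_eq_one V) hpv
  have hziU : zi = U := by rw [hziUV, hV1, mul_one]
  -- decompose y into p-part c and p'-part d
  obtain ⟨iy, jy, hyij, hpely, hdvdy⟩ := decomp p hp y
  set c := y ^ iy with hc_def
  set d := y ^ jy with hd_def
  have hpnd : ¬ p ∣ orderOf d := fun hdp =>
    Nat.not_dvd_ordCompl hp (orderOf_pos y).ne' (dvd_trans hdp hdvdy)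
  -- c commutes with all p-elements of F
  have hccomm : ∀ w ∈ F, Pel p w → c * w = w * c := fun w hw hpw =>
    pel_comm_pel_of_normal hA hFn hFc hp hpely hw hpw
  -- d fixes zi
  have hcd : c * d = d * c := by
    rw [hc_def, hd_def, ← zpow_add, ← zpow_add, add_comm]
  have hdzi : d * zi = zi * d := by
    have h1 : c * (d * zi * d⁻¹) * c⁻¹ = zi := by
      calc c * (d * zi * d⁻¹) * c⁻¹ = (c * d) * zi * (c * d)⁻¹ := by group
      _ = y * zi * y⁻¹ := by rw [← hyij]
      _ = zi := hziy
    have h2 : d * zi * d⁻¹ ∈ F := hFn.conj_mem _ hziF d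
    have h3 : Pel p (d * zi * d⁻¹) := pel_conj hpel d
    have h4 : c * (d * zi * d⁻¹) = (d * zi * d⁻¹) * c := hccomm _ h2 h3
    have h6 : c * (d * zi * d⁻¹) * c⁻¹ = d * zi * d⁻¹ := by
      rw [h4]; group
    have h5 : d * zi * d⁻¹ = zi := by
      rw [← h6]; exact h1
    calc d * zi = (d * zi * d⁻¹) * d := by group
    _ = zi * d := by rw [h5]
  -- y * u⁻¹ * y⁻¹ = d * u⁻¹ * d⁻¹
  have hconj_u : y * u⁻¹ * y⁻¹ = d * u⁻¹ * d⁻¹ := by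
    have hw : d * u⁻¹ * d⁻¹ ∈ F := hFn.conj_mem _ (F.inv_mem huF) d
    have hpw : Pel p (d * u⁻¹ * d⁻¹) := pel_conj (pel_inv hpu) d
    have hcw : c * (d * u⁻¹ * d⁻¹) * c⁻¹ = d * u⁻¹ * d⁻¹ := by
      rw [hccomm _ hw hpw]; group
    calc y * u⁻¹ * y⁻¹ = (c * d) * u⁻¹ * (c * d)⁻¹ := by rw [← hyij]
    _ = c * (d * u⁻¹ * d⁻¹) * c⁻¹ := by group
    _ = d * u⁻¹ * d⁻¹ := hcw
  have hzi_ud : zi = u * (d * u⁻¹ * d⁻¹) := by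
    rw [hziU, hU_eq, hconj_u]
  -- telescoping: zi ^ t = u * d^t * u⁻¹ * (d^t)⁻¹
  have htel : ∀ t : ℕ, zi ^ t = u * d ^ t * u⁻¹ * (d ^ t)⁻¹ := by
    intro t
    induction t with
    | zero => simp
    | succ t ih =>
      have hdti : zi * (d ^ t)⁻¹ = (d ^ t)⁻¹ * zi := by
        have : Commute d zi := hdzi
        exact ((this.pow_left t).inv_left.eq).symm
      calc zi ^ (t + 1) = zi ^ t * zi := by rw [pow_succ]
      _ = u * d ^ t * u⁻¹ * (d ^ t)⁻¹ * zi := by rw [ih]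
      _ = u * d ^ t * u⁻¹ * ((d ^ t)⁻¹ * zi) := by rw [mul_assoc]
      _ = u * d ^ t * u⁻¹ * (zi * (d ^ t)⁻¹) := by rw [hdti]
      _ = u * d ^ t * u⁻¹ * ((u * (d * u⁻¹ * d⁻¹)) * (d ^ t)⁻¹) := by rw [← hzi_ud]
      _ = u * d ^ (t + 1) * u⁻¹ * (d ^ (t + 1))⁻¹ := by
          rw [pow_succ]; group
  have hzin : zi ^ orderOf d = 1 := by
    rw [htel (orderOf d), pow_orderOf_eq_one, mul_one, inv_one, mul_one, mul_inv_cancel]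
  exact pel_eq_one hp hpel hzin hpnd

end Stmt12Aux

open scoped Pointwise commutatorElement in
/-- Let `G` be a finite `A`-group with `G = F ⋊ T` an internal semidirect
product, `F = F(G)` the Fitting subgroup. Then for every `y ∈ T`, `F` is the internal
direct product `F = C_F(y) × [F, y]`. -/
theorem stmt_12 (G : Type*) [Group G] [Finite G] (hA : IsAGroup G)
    (T : Subgroup G) (hdisj : fitting G ⊓ T = ⊥)
    (hgen : (fitting G : Set G) * (T : Set G) = Set.univ)
    (y : G) (hy : y ∈ T) :
    (Subgroup.centralizer {y} ⊓ fitting G)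
        ⊔ Subgroup.closure {z | ∃ f ∈ fitting G, z = ⁅f, y⁆} = fitting G ∧
    (Subgroup.centralizer {y} ⊓ fitting G)
        ⊓ Subgroup.closure {z | ∃ f ∈ fitting G, z = ⁅f, y⁆} = ⊥ ∧
    ∀ c ∈ Subgroup.centralizer {y} ⊓ fitting G,
      ∀ d ∈ Subgroup.closure {z | ∃ f ∈ fitting G, z = ⁅f, y⁆}, c * d = d * c := by
  classical
  set F := fitting G with hF_def
  have hFn : F.Normal := fitting_normal G
  have hFc : ∀ a ∈ F, ∀ b ∈ F, a * b = b * a := Stmt12Aux.fitting_comm hA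
  set φ := Stmt12Aux.phi F hFn hFc y with hφ
  have hφmem : ∀ a : ↥F, φ a ∈ F := Stmt12Aux.phi_mem hFn hFc y
  set ψ : ↥F →* ↥F := φ.codRestrict F hφmem with hψ
  have hψcoe : ∀ a : ↥F, ((ψ a : ↥F) : G) = φ a := fun a => rfl
  have hφ_eq_comm : ∀ a : ↥F, φ a = ⁅(a : G), y⁆ := by
    intro a
    show (a : G) * (y * (a : G)⁻¹ * y⁻¹) = ⁅(a : G), y⁆
    rw [commutatorElement_def]; group
  -- ker ⊓ range = ⊥
  have hinf : ψ.ker ⊓ ψ.range = ⊥ := by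
    rw [eq_bot_iff]
    rintro a ⟨hak, har⟩
    have hak' : φ a = 1 := by
      have h0 := MonoidHom.mem_ker.mp hak
      have h1 := congrArg (Subtype.val) h0
      rwa [hψcoe] at h1
    have hfix : y * (a : G) * y⁻¹ = (a : G) := by
      have : (a : G) * (y * (a : G)⁻¹ * y⁻¹) = 1 := hak'
      have h2 : y * (a : G)⁻¹ * y⁻¹ = (a : G)⁻¹ := by
        rw [← mul_left_cancel_iff (a := (a : G)), mul_inv_cancel, this]
      calc y * (a : G) * y⁻¹ = (y * (a : G)⁻¹ * y⁻¹)⁻¹ := by group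
      _ = ((a : G)⁻¹)⁻¹ := by rw [h2]
      _ = (a : G) := inv_inv _
    obtain ⟨b, hb⟩ := har
    have hab : (a : G) = φ b := by
      rw [← hψcoe b, hb]
    have : (a : G) = 1 :=
      Stmt12Aux.key hA F hFn hFc y (a : G) a.2 hfix b hab
    exact Subgroup.mem_bot.mpr (Subtype.ext this)
  -- ker ⊔ range = ⊤
  have hsup : ψ.ker ⊔ ψ.range = ⊤ := by
    rw [eq_top_iff]
    intro a _
    have hinj : Function.Injective
        (fun s : ↥ψ.range => (⟨ψ (s : ↥F), ⟨(s : ↥F), rfl⟩⟩ : ↥ψ.range)) := by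
      intro s1 s2 h12
      have h12' : ψ (s1 : ↥F) = ψ (s2 : ↥F) := congrArg Subtype.val h12
      have hker : (s1 : ↥F) * (s2 : ↥F)⁻¹ ∈ ψ.ker := by
        rw [MonoidHom.mem_ker, map_mul, map_inv, h12', mul_inv_cancel]
      have hrange : (s1 : ↥F) * (s2 : ↥F)⁻¹ ∈ ψ.range :=
        ψ.range.mul_mem s1.2 (ψ.range.inv_mem s2.2)
      have : (s1 : ↥F) * (s2 : ↥F)⁻¹ ∈ ψ.ker ⊓ ψ.range := ⟨hker, hrange⟩
      rw [hinf, Subgroup.mem_bot] at this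
      exact Subtype.ext (by rw [← mul_inv_eq_one]; exact this)
    have hsurj := Finite.injective_iff_surjective.mp hinj
    obtain ⟨s, hs⟩ := hsurj ⟨ψ a, ⟨a, rfl⟩⟩
    have hs' : ψ (s : ↥F) = ψ a := congrArg Subtype.val hs
    have hker : a * (s : ↥F)⁻¹ ∈ ψ.ker := by
      rw [MonoidHom.mem_ker, map_mul, map_inv, hs', mul_inv_cancel]
    have : a = (a * (s : ↥F)⁻¹) * (s : ↥F) := by group
    rw [this]
    exact Subgroup.mul_mem _ ((le_sup_left : ψ.ker ≤ _) hker)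
      ((le_sup_right : ψ.range ≤ _) s.2)
  -- identification of the mapped subgroups
  have hK : Subgroup.map F.subtype ψ.ker = Subgroup.centralizer {y} ⊓ F := by
    ext x
    simp only [Subgroup.mem_map, MonoidHom.mem_ker, Subgroup.mem_inf]
    constructor
    · rintro ⟨a, ha, rfl⟩
      have hak' : φ a = 1 := by
        have h0 := congrArg Subtype.val ha
        rwa [hψcoe] at h0
      have h1 : (a : G) * (y * (a : G)⁻¹ * y⁻¹) = 1 := hak'
      have h2 : y * (a : G)⁻¹ * y⁻¹ = (a : G)⁻¹ := by
        rw [← mul_left_cancel_iff (a := (a : G)), mul_inv_cancel, h1]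
      have hc : y * (a : G) * y⁻¹ = (a : G) := by
        calc y * (a : G) * y⁻¹ = (y * (a : G)⁻¹ * y⁻¹)⁻¹ := by group
        _ = ((a : G)⁻¹)⁻¹ := by rw [h2]
        _ = (a : G) := inv_inv _
      refine ⟨Subgroup.mem_centralizer_iff.mpr ?_, a.2⟩
      intro g hg
      have hg' : g = y := hg
      rw [hg']
      show y * (a : G) = (a : G) * y
      calc y * (a : G) = (y * (a : G) * y⁻¹) * y := by group
      _ = (a : G) * y := by rw [hc]
    · rintro ⟨hxc, hxF⟩
      have hyx : y * x = x * y := Subgroup.mem_centralizer_iff.mp hxc y rfl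
      refine ⟨⟨x, hxF⟩, ?_, rfl⟩
      apply Subtype.ext
      rw [hψcoe]
      have h9 : y * x⁻¹ = x⁻¹ * y := Commute.inv_right hyx
      have hxy : y * x⁻¹ * y⁻¹ = x⁻¹ := by rw [h9]; group
      show x * (y * x⁻¹ * y⁻¹) = 1
      rw [hxy, mul_inv_cancel]
  have hR : Subgroup.map F.subtype ψ.range = Subgroup.closure {z | ∃ f ∈ F, z = ⁅f, y⁆} := by
    have hset : {z | ∃ f ∈ F, z = ⁅f, y⁆} = ((Subgroup.map F.subtype ψ.range : Subgroup G) : Set G) := by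
      ext x
      simp only [Set.mem_setOf_eq, SetLike.mem_coe, Subgroup.mem_map, MonoidHom.mem_range]
      constructor
      · rintro ⟨f, hf, rfl⟩
        exact ⟨ψ ⟨f, hf⟩, ⟨⟨f, hf⟩, rfl⟩, by rw [show F.subtype (ψ ⟨f, hf⟩) = φ ⟨f, hf⟩ from rfl,
            hφ_eq_comm]⟩
      · rintro ⟨a, ⟨b, rfl⟩, rfl⟩
        exact ⟨(b : G), b.2, by rw [show F.subtype (ψ b) = φ b from rfl, hφ_eq_comm]⟩
    rw [hset, Subgroup.closure_eq]
  have hclF : Subgroup.closure {z | ∃ f ∈ F, z = ⁅f, y⁆} ≤ F := by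
    apply (Subgroup.closure_le F).mpr
    rintro x ⟨f, hf, rfl⟩
    have h1 : ⁅f, y⁆ = f * (y * f⁻¹ * y⁻¹) := by rw [commutatorElement_def]; group
    rw [SetLike.mem_coe, h1]
    exact F.mul_mem hf (hFn.conj_mem _ (F.inv_mem hf) y)
  refine ⟨?_, ?_, ?_⟩
  · rw [← hK, ← hR, ← Subgroup.map_sup, hsup]
    rw [← MonoidHom.range_eq_map, Subgroup.range_subtype]
  · rw [← hK, ← hR, ← Subgroup.map_inf _ _ _ F.subtype_injective, hinf, Subgroup.map_bot]
  · intro c hc d hd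
    have hcF : c ∈ F := hc.2
    have hdF : d ∈ F := hclF hd
    exact hFc c hcF d hdF
end

section
/- Let G be a finite A-group that is an internal semidirect product G = F ⋊ T, where F = F(G) is the Fitting subgroup of G and T is a complement. Then for every g ∈ G there exists k ∈ G such that k⁻¹gk = xy with x ∈ F, y ∈ T and xy = yx (where x or y may be the identity). -/
set_option linter.unusedSectionVars false
set_option linter.unusedVariables false
set_option maxHeartbeats 1000000
open scoped commutatorElement

section AuxA
variable {G : Type*} [Group G] [Finite G]

theorem aux_comm_of_pgroup (hA : IsAGroup G) {p : ℕ} (hp : p.Prime) {K : Subgroup G}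
    (hK : IsPGroup p K) {a b : G} (ha : a ∈ K) (hb : b ∈ K) : a * b = b * a := by
  obtain ⟨P, hle⟩ := hK.exists_le_sylow
  exact congrArg Subtype.val (hA p hp P ⟨a, hle ha⟩ ⟨b, hle hb⟩)

theorem isAGroup_subgroup (hA : IsAGroup G) (H : Subgroup G) : IsAGroup ↥H := by
  intro p hp Q a b
  have h := aux_comm_of_pgroup hA hp (Q.isPGroup'.map H.subtype)
    (Subgroup.mem_map_of_mem H.subtype a.2) (Subgroup.mem_map_of_mem H.subtype b.2)
  exact Subtype.ext (Subtype.ext h)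

theorem taunt (hA : IsAGroup G) {x : G} (hx1 : x ∈ commutator G)
    (hx2 : x ∈ Subgroup.center G) : x = 1 := by
  rw [← orderOf_eq_one_iff]
  by_contra hne
  obtain ⟨p, hp, hpd⟩ := Nat.exists_prime_and_dvd hne
  haveI : Fact p.Prime := ⟨hp⟩
  obtain ⟨P⟩ : Nonempty (Sylow p G) := inferInstance
  haveI : IsMulCommutative ↥(P : Subgroup G) := ⟨⟨fun a b => hA p hp P a b⟩⟩
  letI : CommGroup ↥(P : Subgroup G) :=
    { (inferInstance : Group ↥(P : Subgroup G)) with mul_comm := hA p hp P }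
  let ϕ : ↥(P : Subgroup G) →* ↥(P : Subgroup G) := MonoidHom.id _
  have key : ∀ (k : ℕ) (g₀ : G),
      g₀⁻¹ * x ^ k * g₀ ∈ (P : Subgroup G) → g₀⁻¹ * x ^ k * g₀ = x ^ k := by
    intro k g₀ _
    have hc : x ^ k ∈ Subgroup.center G := Subgroup.pow_mem _ hx2 k
    have := (Subgroup.mem_center_iff.mp hc) g₀⁻¹
    rw [this]; group
  have h2 := MonoidHom.transfer_eq_pow ϕ x key
  have h1 : MonoidHom.transfer ϕ x = 1 := by
    have hker : commutator G ≤ (MonoidHom.transfer ϕ).ker := by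
      rw [commutator, Subgroup.commutator_le]
      intro g _ h _
      rw [MonoidHom.mem_ker, map_commutatorElement]
      exact commutatorElement_eq_one_iff_commute.mpr (mul_comm _ _)
    exact hker hx1
  rw [h2] at h1
  have hpow : x ^ (P : Subgroup G).index = 1 := by
    simpa [ϕ, Subtype.ext_iff] using h1
  have := (orderOf_dvd_of_pow_eq_one hpow)
  exact P.not_dvd_index (hpd.trans this)

end AuxA



theorem aux_sylow_join_top (K : Type*) [Group K] [Finite K] :
    (⨆ (p : ℕ) (_ : Fact p.Prime) (P : Sylow p K), (P : Subgroup K)) = ⊤ := by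
  set J := ⨆ (p : ℕ) (_ : Fact p.Prime) (P : Sylow p K), (P : Subgroup K) with hJ
  apply Subgroup.eq_top_of_card_eq
  have hd : Nat.card ↥J ∣ Nat.card K := Subgroup.card_subgroup_dvd_card _
  have hJ0 : Nat.card ↥J ≠ 0 := Nat.card_pos.ne'
  have hK0 : Nat.card K ≠ 0 := Nat.card_pos.ne'
  refine Nat.dvd_antisymm hd ?_
  rw [← Nat.factorization_le_iff_dvd hK0 hJ0, Finsupp.le_def]
  intro p
  by_cases hp : p.Prime
  · haveI : Fact p.Prime := ⟨hp⟩
    obtain ⟨P⟩ : Nonempty (Sylow p K) := inferInstance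
    have hPle : (P : Subgroup K) ≤ J := by
      apply le_iSup_of_le p; apply le_iSup_of_le ⟨hp⟩; exact le_iSup _ P
    have hcard : Nat.card ↥(P : Subgroup K) = p ^ (Nat.card K).factorization p :=
      P.card_eq_multiplicity
    have : p ^ (Nat.card K).factorization p ∣ Nat.card ↥J := by
      rw [← hcard]; exact Subgroup.card_dvd_of_le hPle
    exact (Nat.Prime.pow_dvd_iff_le_factorization hp hJ0).mp this
  · simp [Nat.factorization_eq_zero_of_not_prime _ hp]

theorem fitting_eq_join (G : Type*) [Group G] [Finite G] :
    fitting G = ⨆ P ∈ {P : Subgroup G | P.Normal ∧ ∃ p, p.Prime ∧ IsPGroup p P}, P := by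
  apply le_antisymm
  · refine iSup₂_le fun N hN => ?_
    obtain ⟨hNn, hNnil⟩ := hN
    intro x hx
    have htop : (⟨x, hx⟩ : ↥N) ∈
        (⨆ (p : ℕ) (_ : Fact p.Prime) (P : Sylow p ↥N), (P : Subgroup ↥N)) := by
      rw [aux_sylow_join_top]; trivial
    have hmap : x ∈ Subgroup.map N.subtype
        (⨆ (p : ℕ) (_ : Fact p.Prime) (P : Sylow p ↥N), (P : Subgroup ↥N)) :=
      ⟨_, htop, rfl⟩
    rw [Subgroup.map_iSup] at hmap
    have hle : (⨆ (p : ℕ), Subgroup.map N.subtype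
        (⨆ (_ : Fact p.Prime) (P : Sylow p ↥N), (P : Subgroup ↥N))) ≤
        ⨆ P ∈ {P : Subgroup G | P.Normal ∧ ∃ p, p.Prime ∧ IsPGroup p P}, P := by
      refine iSup_le fun p => ?_
      rw [Subgroup.map_iSup]
      refine iSup_le fun hpf => ?_
      rw [Subgroup.map_iSup]
      refine iSup_le fun P => ?_
      haveI := hpf
      haveI hNn' : N.Normal := hNn
      have h4 : ∀ (q : ℕ) (_hq : Fact q.Prime) (Q : Sylow q ↥N), (Q : Subgroup ↥N).Normal :=
        ((isNilpotent_of_finite_tfae (G := ↥N)).out 0 3).mp hNnil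
      haveI hPn : (P : Subgroup ↥N).Normal := h4 p hpf P
      haveI : (P : Subgroup ↥N).Characteristic := Sylow.characteristic_of_normal P hPn
      refine le_iSup₂_of_le (Subgroup.map N.subtype (P : Subgroup ↥N)) ?_ le_rfl
      exact ⟨inferInstance, p, hpf.out, P.isPGroup'.map N.subtype⟩
    exact hle hmap
  · refine iSup₂_le fun P hP => ?_
    obtain ⟨hPn, p, hp, hPp⟩ := hP
    haveI : Fact p.Prime := ⟨hp⟩
    have : Group.IsNilpotent ↥P := IsPGroup.isNilpotent hPp
    exact le_iSup₂_of_le P ⟨hPn, this⟩ le_rfl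

theorem base_pair {G : Type*} [Group G] [Finite G] (hA : IsAGroup G) :
    ∀ P ∈ {P : Subgroup G | P.Normal ∧ ∃ p, p.Prime ∧ IsPGroup p P},
    ∀ Q ∈ {P : Subgroup G | P.Normal ∧ ∃ p, p.Prime ∧ IsPGroup p P},
    ∀ x ∈ P, ∀ y ∈ Q, x * y = y * x := by
  rintro P ⟨hPn, p, hp, hPp⟩ Q ⟨hQn, q, hq, hQq⟩ x hx y hy
  by_cases hpq : p = q
  · subst hpq
    haveI := hQn
    have hsup : IsPGroup p ↥(P ⊔ Q) := IsPGroup.to_sup_of_normal_right hPp hQq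
    exact aux_comm_of_pgroup hA hp hsup (Subgroup.mem_sup_left hx) (Subgroup.mem_sup_right hy)
  · have hc1 : ⁅x, y⁆ ∈ P := by
      rw [commutatorElement_def]
      have h1 := hPn.conj_mem _ (P.inv_mem hx) y
      have := P.mul_mem hx h1
      simpa [mul_assoc] using this
    have hc2 : ⁅x, y⁆ ∈ Q := by
      rw [commutatorElement_def]
      have h1 := hQn.conj_mem _ hy x
      have := Q.mul_mem h1 (Q.inv_mem hy)
      simpa [mul_assoc] using this
    obtain ⟨a, ha⟩ := hPp ⟨_, hc1⟩
    obtain ⟨b, hb⟩ := hQq ⟨_, hc2⟩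
    have ha' : ⁅x, y⁆ ^ p ^ a = 1 := by simpa using congrArg Subtype.val ha
    have hb' : ⁅x, y⁆ ^ q ^ b = 1 := by simpa using congrArg Subtype.val hb
    have h1 := orderOf_dvd_of_pow_eq_one ha'
    have h2 := orderOf_dvd_of_pow_eq_one hb'
    have hco : Nat.Coprime (p ^ a) (q ^ b) :=
      (((Nat.coprime_primes hp hq).mpr hpq)).pow a b
    have hone : orderOf ⁅x, y⁆ = 1 :=
      Nat.eq_one_of_dvd_one (hco ▸ Nat.dvd_gcd h1 h2)
    exact (commutatorElement_eq_one_iff_commute.mp (orderOf_eq_one_iff.mp hone)).eq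

theorem fitting_comm (G : Type*) [Group G] [Finite G] (hA : IsAGroup G) :
    ∀ x ∈ fitting G, ∀ y ∈ fitting G, x * y = y * x := by
  rw [fitting_eq_join]
  set S := {P : Subgroup G | P.Normal ∧ ∃ p, p.Prime ∧ IsPGroup p P} with hS
  intro x hx y hy
  rw [iSup_subtype'] at hx hy
  refine Subgroup.iSup_induction _
    (C := fun a => ∀ b, b ∈ (⨆ P : S, (P : Subgroup G)) → a * b = b * a) hx
    (fun P a haP => ?_) (fun b _ => by simp) (fun u v hu hv b hb => by
      show u * v * b = b * (u * v)
      rw [mul_assoc, hv b hb, ← mul_assoc, hu b hb, mul_assoc]) y hy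
  intro b hb
  refine Subgroup.iSup_induction _ (C := fun b => a * b = b * a) hb
    (fun Q c hcQ => base_pair hA P P.2 Q Q.2 a haP c hcQ) (by show a * 1 = 1 * a; simp)
    (fun c d h1 h2 => by show a * (c * d) = c * d * a; rw [← mul_assoc, h1, mul_assoc, h2, ← mul_assoc])

open scoped Pointwise in
/-- Let `G` be a finite `A`-group with `G = F ⋊ T` an internal semidirect
product, `F = F(G)` the Fitting subgroup. Then every `g ∈ G` has a conjugate
`k⁻¹gk = xy` with `x ∈ F`, `y ∈ T` and `xy = yx`. -/
theorem stmt_13 (G : Type*) [Group G] [Finite G] (hA : IsAGroup G)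
    (T : Subgroup G) (hdisj : fitting G ⊓ T = ⊥)
    (hgen : (fitting G : Set G) * (T : Set G) = Set.univ)
    (g : G) :
    ∃ k x y : G, x ∈ fitting G ∧ y ∈ T ∧ k⁻¹ * g * k = x * y ∧ x * y = y * x := by
  classical
  have hg : g ∈ (fitting G : Set G) * (T : Set G) := by rw [hgen]; trivial
  obtain ⟨aG, haF, t, htT, rfl⟩ := Set.mem_mul.mp hg
  set F := fitting G with hF
  letI : CommGroup ↥F :=
    { (inferInstance : Group ↥F) with
      mul_comm := fun a b => Subtype.ext (fitting_comm G hA _ a.2 _ b.2) }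
  let ψ : ↥F →* ↥F :=
    { toFun := fun f => (MulAut.conjNormal t f) * f⁻¹
      map_one' := by simp
      map_mul' := fun f g => by
        show MulAut.conjNormal t (f * g) * (f * g)⁻¹ =
          MulAut.conjNormal t f * f⁻¹ * (MulAut.conjNormal t g * g⁻¹)
        rw [map_mul, mul_inv_rev]
        simp [mul_comm, mul_left_comm, mul_assoc] }
  have hψval : ∀ f : ↥F, (↑(ψ f) : G) = t * ↑f * t⁻¹ * (↑f : G)⁻¹ := by
    intro f
    show (↑(MulAut.conjNormal t f * f⁻¹) : G) = _
    push_cast [MulAut.conjNormal_apply]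
    rfl
  have hker_iff : ∀ f : ↥F, f ∈ ψ.ker ↔ t * (↑f : G) = ↑f * t := by
    intro f
    rw [MonoidHom.mem_ker]
    constructor
    · intro h
      have := congrArg Subtype.val h
      rw [hψval] at this
      simp only [Subgroup.coe_one] at this
      have h2 : t * (↑f : G) * t⁻¹ = ↑f := by
        have := mul_eq_one_iff_eq_inv.mp this
        rwa [inv_inv] at this
      have h3 := congrArg (· * t) h2
      simpa [mul_assoc] using h3
    · intro h
      apply Subtype.ext
      rw [hψval]
      simp only [Subgroup.coe_one]
      rw [h]; group
  have h1 : ∀ r : ↥F, r ∈ ψ.range → t * ↑r = ↑r * t → r = 1 := by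
    intro r hr hcomm
    obtain ⟨f, hf⟩ := hr
    set H := F ⊔ Subgroup.zpowers t with hH
    have hFH : F ≤ H := le_sup_left
    have htH : t ∈ H := Subgroup.mem_sup_right (Subgroup.mem_zpowers t)
    have hAH : IsAGroup ↥H := isAGroup_subgroup hA H
    have hrG : (↑r : G) = t * ↑f * t⁻¹ * (↑f : G)⁻¹ := by
      rw [← hf]; exact hψval f
    let rH : ↥H := ⟨↑r, hFH r.2⟩
    have hcomH : rH = ⁅(⟨t, htH⟩ : ↥H), ⟨↑f, hFH f.2⟩⁆ := by
      apply Subtype.ext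
      rw [commutatorElement_def]
      push_cast
      exact hrG
    have hcent : rH ∈ Subgroup.center ↥H := by
      rw [Subgroup.mem_center_iff]
      intro gH
      have hle : H ≤ Subgroup.centralizer {(↑r : G)} := by
        rw [hH]
        apply sup_le
        · intro z hz
          rw [Subgroup.mem_centralizer_iff]
          rintro w hw
          rw [Set.mem_singleton_iff] at hw
          subst hw
          exact fitting_comm G hA _ r.2 z hz
        · rw [Subgroup.zpowers_le, Subgroup.mem_centralizer_iff]
          rintro w hw
          rw [Set.mem_singleton_iff] at hw
          subst hw
          exact hcomm.symm
      have := hle gH.2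
      rw [Subgroup.mem_centralizer_iff] at this
      exact Subtype.ext (this _ rfl).symm
    have hcomm' : rH ∈ commutator ↥H := by
      rw [hcomH, commutator]
      exact Subgroup.commutator_mem_commutator (Subgroup.mem_top _) (Subgroup.mem_top _)
    have hone := taunt hAH hcomm' hcent
    have : (↑r : G) = 1 := congrArg Subtype.val hone
    exact Subtype.ext this
  let m : ψ.ker × ψ.range → ↥F := fun z => ↑z.1 * ↑z.2
  have hinj : Function.Injective m := by
    rintro ⟨k1, r1⟩ ⟨k2, r2⟩ h
    simp only [m] at h
    have e1 : (k1 : ↥F) = ↑k2 * ↑r2 * (↑r1 : ↥F)⁻¹ := by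
      rw [← h]; group
    have hd : ((k2 : ↥F)⁻¹ * ↑k1 : ↥F) = ↑r2 * (↑r1 : ↥F)⁻¹ := by
      rw [e1]; group
    have hdk : ((k2 : ↥F)⁻¹ * ↑k1 : ↥F) ∈ ψ.ker := ψ.ker.mul_mem (ψ.ker.inv_mem k2.2) k1.2
    have hdr : ((k2 : ↥F)⁻¹ * ↑k1 : ↥F) ∈ ψ.range := by
      rw [hd]; exact ψ.range.mul_mem r2.2 (ψ.range.inv_mem r1.2)
    have hone : ((k2 : ↥F)⁻¹ * ↑k1 : ↥F) = 1 :=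
      h1 _ hdr ((hker_iff _).mp hdk)
    have hk : (k1 : ↥F) = k2 := by
      have := inv_mul_eq_one.mp hone; exact this.symm
    have hr : (r1 : ↥F) = r2 := by
      rw [hk] at h
      exact mul_left_cancel h
    exact Prod.ext (Subtype.ext hk) (Subtype.ext hr)
  have hcard : Nat.card (ψ.ker × ψ.range) = Nat.card ↥F := by
    rw [Nat.card_prod]
    have e := Subgroup.card_eq_card_quotient_mul_card_subgroup ψ.ker
    have e2 : Nat.card (↥F ⧸ ψ.ker) = Nat.card ψ.range :=
      Nat.card_congr (QuotientGroup.quotientKerEquivRange ψ).toEquiv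
    rw [e, e2]; ring
  have hbij := (Nat.bijective_iff_injective_and_card m).mpr ⟨hinj, hcard⟩
  obtain ⟨⟨k, r⟩, hkr⟩ := hbij.surjective ⟨aG, haF⟩
  obtain ⟨f0, hf0⟩ := r.2
  set fG := (↑f0 : G) with hfG
  set kx := ((k : ↥F) : G) with hkx
  have hkxF : kx ∈ fitting G := (k : ↥F).2
  have hf0F : fG ∈ fitting G := f0.2
  have haeq : aG = kx * (t * fG * t⁻¹ * fG⁻¹) := by
    have h' := congrArg Subtype.val hkr
    have h'' : kx * (↑(r : ↥F) : G) = aG := h'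
    rw [← h'']
    congr 1
    rw [← hf0]
    exact hψval f0
  have hkt : t * kx = kx * t := (hker_iff _).mp k.2
  have hc1 : fG * kx = kx * fG := fitting_comm G hA fG hf0F kx hkxF
  have htf : t * fG * t⁻¹ ∈ fitting G := (fitting_normal G).conj_mem _ hf0F t
  have hc2 : fG * (t * fG * t⁻¹) = (t * fG * t⁻¹) * fG := fitting_comm G hA fG hf0F _ htf
  refine ⟨fG⁻¹, kx, t, hkxF, htT, ?_, hkt.symm⟩
  rw [inv_inv, haeq]
  calc fG * (kx * (t * fG * t⁻¹ * fG⁻¹) * t) * fG⁻¹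
      = (fG * kx) * ((t * fG * t⁻¹) * fG⁻¹ * t * fG⁻¹) := by group
    _ = (kx * fG) * ((t * fG * t⁻¹) * fG⁻¹ * t * fG⁻¹) := by rw [hc1]
    _ = kx * (fG * (t * fG * t⁻¹)) * (fG⁻¹ * t * fG⁻¹) := by group
    _ = kx * ((t * fG * t⁻¹) * fG) * (fG⁻¹ * t * fG⁻¹) := by rw [hc2]
    _ = kx * t := by group
end

section
/- Let G be a finite A-group that is an internal semidirect product G = F ⋊ T, where F = F(G) is the Fitting subgroup of G and T is a complement. Let x ∈ F and y ∈ T with xy = yx. Then C_G(xy) = C_G(x) ∩ C_G(y); moreover, if C_G(x)C_G(y) = G, then Ind(G, xy) = Ind(G, x) · Ind(G, y). -/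
section AuxLemmas
open scoped Pointwise
variable {G : Type*} [Group G]

lemma aux_pgroup_comm [Finite G] (hA : IsAGroup G) {p : ℕ} (hp : p.Prime)
    {P : Subgroup G} (hP : IsPGroup p P) {a b : G} (ha : a ∈ P) (hb : b ∈ P) :
    Commute a b := by
  obtain ⟨Q, hQ⟩ := hP.exists_le_sylow
  have := hA p hp Q ⟨a, hQ ha⟩ ⟨b, hQ hb⟩
  exact congrArg Subtype.val this

/-- splitting an element into q-part and q'-part -/

lemma aux_split [Finite G] (g : G) {q : ℕ} (hq : q.Prime) :
    ∃ a b : G, g = a * b ∧ (∃ i : ℕ, a = g ^ i) ∧ (∃ j : ℕ, b = g ^ j) ∧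
      a ^ (q ^ (orderOf g).factorization q) = 1 ∧
      b ^ ((orderOf g) / q ^ (orderOf g).factorization q) = 1 := by
  set m := orderOf g with hm
  have hm0 : m ≠ 0 := (orderOf_pos g).ne'
  set v := m.factorization q
  set m' := m / q ^ v with hm'
  have hcop : Nat.Coprime (q ^ v) m' := Nat.Coprime.pow_left v (Nat.coprime_ordCompl hq hm0)
  have hmul : q ^ v * m' = m := Nat.ordProj_mul_ordCompl_eq_self m q
  obtain ⟨n₁, hn₁⟩ := Nat.chineseRemainder hcop 1 0
  obtain ⟨n₂, hn₂⟩ := Nat.chineseRemainder hcop 0 1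
  refine ⟨g ^ n₁, g ^ n₂, ?_, ⟨n₁, rfl⟩, ⟨n₂, rfl⟩, ?_, ?_⟩
  · rw [← pow_add]
    have h1 : n₁ + n₂ ≡ 1 [MOD q ^ v] := by
      simpa using Nat.ModEq.add hn₁.1 hn₂.1
    have h2 : n₁ + n₂ ≡ 1 [MOD m'] := by
      simpa using Nat.ModEq.add hn₁.2 hn₂.2
    have : n₁ + n₂ ≡ 1 [MOD m] := by
      rw [← hmul]
      exact (Nat.modEq_and_modEq_iff_modEq_mul hcop).mp ⟨h1, h2⟩
    have := (pow_eq_pow_iff_modEq).mpr this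
    rw [pow_one] at this
    exact this.symm
  · rw [← pow_mul]
    apply orderOf_dvd_iff_pow_eq_one.mp
    rw [← hm]
    have : m' ∣ n₁ := (Nat.modEq_zero_iff_dvd).mp hn₁.2
    obtain ⟨c, rfl⟩ := this
    rw [show m' * c * q ^ v = (q ^ v * m') * c by ring, hmul]
    exact Dvd.intro c rfl
  · rw [← pow_mul]
    apply orderOf_dvd_iff_pow_eq_one.mp
    rw [← hm]
    have : q ^ v ∣ n₂ := (Nat.modEq_zero_iff_dvd).mp hn₂.1
    obtain ⟨c, rfl⟩ := this
    rw [show q ^ v * c * m' = (q ^ v * m') * c by ring, hmul]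
    exact Dvd.intro c rfl

/-- an element killed by coprime exponents is trivial -/

lemma aux_coprime_eq_one {c : G} {a b : ℕ} (ha : c ^ a = 1) (hb : c ^ b = 1)
    (hab : Nat.Coprime a b) : c = 1 := by
  rw [← orderOf_eq_one_iff]
  exact Nat.eq_one_of_dvd_coprimes hab (orderOf_dvd_of_pow_eq_one ha)
    (orderOf_dvd_of_pow_eq_one hb)

/-- norm/telescoping trick -/

lemma aux_norm {y e f : G} (hc : y * e = e * y) (he : e = f⁻¹ * (y * f * y⁻¹)) :
    e ^ orderOf y = 1 := by
  have key : ∀ i : ℕ, e ^ i = f⁻¹ * (y ^ i * f * (y ^ i)⁻¹) := by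
    intro i
    induction i with
    | zero => simp
    | succ i ih =>
      have hcy : Commute ((y ^ i)⁻¹) e := (((show Commute y e from hc).pow_left i).inv_left)
      have hfe : f * e = y * f * y⁻¹ := by rw [he]; group
      calc e ^ (i+1) = f⁻¹ * (y ^ i * (f * e) * (y ^ i)⁻¹) := by
            rw [pow_succ, ih]
            rw [show f⁻¹ * (y ^ i * f * (y ^ i)⁻¹) * e = f⁻¹ * (y ^ i * f * ((y ^ i)⁻¹ * e)) by group,
              hcy.eq]
            group
        _ = f⁻¹ * (y ^ (i+1) * f * (y ^ (i+1))⁻¹) := by rw [hfe, pow_succ]; group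
  rw [key (orderOf y), pow_orderOf_eq_one]
  simp

lemma aux_isAGroup_subgroup [Finite G] (hA : IsAGroup G) (H : Subgroup G) :
    IsAGroup ↥H := by
  intro p hp P a b
  have hmap : IsPGroup p ((P : Subgroup ↥H).map H.subtype) := P.isPGroup'.map _
  have hc := aux_pgroup_comm hA hp hmap
    (Subgroup.mem_map.mpr ⟨(a : ↥H), a.2, rfl⟩)
    (Subgroup.mem_map.mpr ⟨(b : ↥H), b.2, rfl⟩)
  exact Subtype.ext (Subtype.ext hc)

lemma aux_nilpotent_comm {N : Type*} [Group N] [Finite N] (hA : IsAGroup N)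
    (hnil : Group.IsNilpotent N) (a b : N) : Commute a b := by
  have hnorm : ∀ (p : ℕ) (_ : Fact p.Prime) (P : Sylow p N), (↑P : Subgroup N).Normal :=
    (isNilpotent_of_finite_tfae.out 0 3).mp hnil
  have hmemSyl : ∀ (p : ℕ) (hp : p.Prime) (c : N), (∃ k, c ^ p ^ k = 1) →
      ∀ P : Sylow p N, c ∈ (P : Subgroup N) := by
    intro p hp c ⟨k, hck⟩ P
    haveI := Fact.mk hp
    have hzp : IsPGroup p (Subgroup.zpowers c) := by
      obtain ⟨e, _, hoc⟩ := (Nat.dvd_prime_pow hp).mp (orderOf_dvd_of_pow_eq_one hck)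
      exact IsPGroup.of_card (by rw [Nat.card_zpowers, hoc])
    obtain ⟨Q, hQ⟩ := hzp.exists_le_sylow
    haveI : Unique (Sylow p N) := Sylow.unique_of_normal Q (hnorm p (Fact.mk hp) Q)
    rw [Subsingleton.elim P Q]
    exact hQ (Subgroup.mem_zpowers c)
  have stepA : ∀ a b : N, (∃ p, p.Prime ∧ ∃ k, a ^ p ^ k = 1) →
      (∃ q, q.Prime ∧ ∃ l, b ^ q ^ l = 1) → Commute a b := by
    rintro a b ⟨p, hp, hak⟩ ⟨q, hq, hbl⟩
    haveI := Fact.mk hp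
    haveI := Fact.mk hq
    by_cases hpq : p = q
    · subst hpq
      obtain ⟨P⟩ : Nonempty (Sylow p N) := inferInstance
      exact aux_pgroup_comm hA hp P.isPGroup' (hmemSyl p hp a hak P) (hmemSyl p hp b hbl P)
    · obtain ⟨P⟩ : Nonempty (Sylow p N) := inferInstance
      obtain ⟨Q⟩ : Nonempty (Sylow q N) := inferInstance
      have haP := hmemSyl p hp a hak P
      have hbQ := hmemSyl q hq b hbl Q
      haveI hPn := hnorm p (Fact.mk hp) P
      haveI hQn := hnorm q (Fact.mk hq) Q
      set c := a⁻¹ * (b⁻¹ * a * b) with hc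
      have hcP : c ∈ (P : Subgroup N) :=
        Subgroup.mul_mem _ (Subgroup.inv_mem _ haP)
          (by simpa using hPn.conj_mem a haP b⁻¹)
      have hcQ : c ∈ (Q : Subgroup N) := by
        have h1 : a⁻¹ * b⁻¹ * a ∈ (Q : Subgroup N) := by
          simpa using hQn.conj_mem b⁻¹ (Subgroup.inv_mem _ hbQ) a⁻¹
        have : (a⁻¹ * b⁻¹ * a) * b ∈ (Q : Subgroup N) := Subgroup.mul_mem _ h1 hbQ
        simpa [hc, mul_assoc] using this
      obtain ⟨k', hk'⟩ := P.2 ⟨c, hcP⟩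
      obtain ⟨l', hl'⟩ := Q.2 ⟨c, hcQ⟩
      have hck : c ^ p ^ k' = 1 := by
        simpa using congrArg Subtype.val hk'
      have hcl : c ^ q ^ l' = 1 := by
        simpa using congrArg Subtype.val hl'
      have hc1 : c = 1 := aux_coprime_eq_one hck hcl
        (Nat.Coprime.pow k' l' ((Nat.coprime_primes hp hq).mpr hpq))
      have : @Bracket.bracket N N commutatorElement a⁻¹ b⁻¹ = 1 := by
        rw [commutatorElement_def]
        simpa [hc, mul_assoc] using hc1
      have h2 := commutatorElement_eq_one_iff_commute.mp this
      simpa using h2.inv_inv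
  have stepB : ∀ a : N, (∃ p, p.Prime ∧ ∃ k, a ^ p ^ k = 1) → ∀ b, Commute a b := by
    intro a ha
    have key : ∀ m : ℕ, ∀ b : N, orderOf b = m → Commute a b := by
      intro m
      induction m using Nat.strong_induction_on with
      | _ m IH =>
        intro b hb
        by_cases hbp : ∃ q, q.Prime ∧ ∃ l, b ^ q ^ l = 1
        · exact stepA a b ha hbp
        · have hm0 : m ≠ 0 := by rw [← hb]; exact (orderOf_pos b).ne'
          have hm1 : m ≠ 1 := by
            intro h
            exact hbp ⟨2, Nat.prime_two, 0, by
              rw [pow_zero, pow_one]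
              exact orderOf_eq_one_iff.mp (by rw [hb, h])⟩
          have hq : m.minFac.Prime := Nat.minFac_prime hm1
          obtain ⟨b1, b2, hbe, _, _, hb1, hb2⟩ := aux_split b hq
          rw [hb] at hb1 hb2
          have hvpos : 0 < m.factorization m.minFac :=
            Nat.Prime.factorization_pos_of_dvd hq hm0 (Nat.minFac_dvd m)
          have h2lt : orderOf b2 < m := by
            refine lt_of_le_of_lt (Nat.le_of_dvd (Nat.ordCompl_pos m.minFac hm0)
              (orderOf_dvd_of_pow_eq_one hb2)) ?_
            exact Nat.div_lt_self (Nat.pos_of_ne_zero hm0)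
              (Nat.one_lt_pow hvpos.ne' hq.one_lt)
          have c1 : Commute a b1 := stepA a b1 ha ⟨m.minFac, hq, _, hb1⟩
          have c2 : Commute a b2 := IH (orderOf b2) h2lt b2 rfl
          rw [hbe]
          exact c1.mul_right c2
    intro b; exact key (orderOf b) b rfl
  -- final: strong induction on orderOf a
  have key : ∀ m : ℕ, ∀ a : N, orderOf a = m → Commute a b := by
    intro m
    induction m using Nat.strong_induction_on with
    | _ m IH =>
      intro a ha
      by_cases hap : ∃ p, p.Prime ∧ ∃ k, a ^ p ^ k = 1
      · exact stepB a hap b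
      · have hm0 : m ≠ 0 := by rw [← ha]; exact (orderOf_pos a).ne'
        have hm1 : m ≠ 1 := by
          intro h
          exact hap ⟨2, Nat.prime_two, 0, by
            rw [pow_zero, pow_one]
            exact orderOf_eq_one_iff.mp (by rw [ha, h])⟩
        have hq : m.minFac.Prime := Nat.minFac_prime hm1
        obtain ⟨a1, a2, hae, _, _, ha1, ha2⟩ := aux_split a hq
        rw [ha] at ha1 ha2
        have hvpos : 0 < m.factorization m.minFac :=
          Nat.Prime.factorization_pos_of_dvd hq hm0 (Nat.minFac_dvd m)
        have h2lt : orderOf a2 < m := by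
          refine lt_of_le_of_lt (Nat.le_of_dvd (Nat.ordCompl_pos m.minFac hm0)
            (orderOf_dvd_of_pow_eq_one ha2)) ?_
          exact Nat.div_lt_self (Nat.pos_of_ne_zero hm0)
            (Nat.one_lt_pow hvpos.ne' hq.one_lt)
        have c1 : Commute a1 b := stepB a1 ⟨m.minFac, hq, _, ha1⟩ b
        have c2 : Commute a2 b := IH (orderOf a2) h2lt a2 rfl
        rw [hae]
        exact c1.mul_left c2
  exact key (orderOf a) a rfl

lemma aux_commutator_mem (H K : Subgroup G) [hHn : H.Normal] [hKn : K.Normal]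
    (hH : ∀ a b : G, a ∈ H → b ∈ H → Commute a b)
    (hK : ∀ a b : G, a ∈ K → b ∈ K → Commute a b)
    {u v : G} (hu : u ∈ H ⊔ K) (hv : v ∈ H ⊔ K) :
    u⁻¹ * v⁻¹ * u * v ∈ H ⊓ K := by
  have hu' : u ∈ (H : Set G) * (K : Set G) := by rw [← Subgroup.mul_normal]; exact hu
  have hv' : v ∈ (H : Set G) * (K : Set G) := by rw [← Subgroup.mul_normal]; exact hv
  obtain ⟨h1, hh1, k1, hk1, rfl⟩ := hu'
  obtain ⟨h2, hh2, k2, hk2, rfl⟩ := hv'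
  have hBH : k2 * h1⁻¹ * k2⁻¹ ∈ H := by
    simpa using hHn.conj_mem h1⁻¹ (H.inv_mem hh1) k2
  have hAH : k1 * h2 * k1⁻¹ ∈ H := by simpa using hHn.conj_mem h2 hh2 k1
  have c1mem : h1 * (k2 * h1⁻¹ * k2⁻¹) ∈ H ⊓ K := by
    constructor
    · exact H.mul_mem hh1 hBH
    · have : (h1 * k2 * h1⁻¹) * k2⁻¹ ∈ K :=
        K.mul_mem (hKn.conj_mem k2 hk2 h1) (K.inv_mem hk2)
      simpa [mul_assoc] using this
  have c2mem : (k1 * h2 * k1⁻¹) * h2⁻¹ ∈ H ⊓ K := by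
    constructor
    · exact H.mul_mem hAH (H.inv_mem hh2)
    · have : k1 * (h2 * k1⁻¹ * h2⁻¹) ∈ K :=
        K.mul_mem hk1 (by simpa using hKn.conj_mem k1⁻¹ (K.inv_mem hk1) h2)
      simpa [mul_assoc] using this
  have hd : (h1 * k1) * (h2 * k2) * ((h2 * k2) * (h1 * k1))⁻¹ ∈ H ⊓ K := by
    have e1 : (h1 * k1) * (h2 * k2) * ((h2 * k2) * (h1 * k1))⁻¹ =
        h1 * (k1 * h2 * k1⁻¹) * ((k1 * k2) * (k2 * k1)⁻¹) * (k2 * h1⁻¹ * k2⁻¹) * h2⁻¹ := by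
      group
    have e2 : (k1 * k2) * (k2 * k1)⁻¹ = 1 := by
      rw [(hK k1 k2 hk1 hk2).eq, mul_inv_cancel]
    have e3 : (h1 * k1) * (h2 * k2) * ((h2 * k2) * (h1 * k1))⁻¹ =
        (h1 * (k2 * h1⁻¹ * k2⁻¹)) * ((k1 * h2 * k1⁻¹) * h2⁻¹) := by
      rw [e1, e2, mul_one, mul_assoc h1, (hH _ _ hAH hBH).eq]
      group
    rw [e3]
    exact Subgroup.mul_mem _ c1mem c2mem
  set u := h1 * k1
  set v := h2 * k2
  have e4 : u⁻¹ * v⁻¹ * u * v = (v * u)⁻¹ * (u * v * (v * u)⁻¹) * (v * u) := by group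
  rw [e4]
  obtain ⟨hdH, hdK⟩ := hd
  constructor
  · simpa using hHn.conj_mem _ hdH (v * u)⁻¹
  · simpa using hKn.conj_mem _ hdK (v * u)⁻¹

lemma aux_sup_nilpotent [Finite G] (H K : Subgroup G) [hHn : H.Normal] [hKn : K.Normal]
    (hH : ∀ a b : G, a ∈ H → b ∈ H → Commute a b)
    (hK : ∀ a b : G, a ∈ K → b ∈ K → Commute a b) :
    Group.IsNilpotent ↥(H ⊔ K) := by
  set L := H ⊔ K with hL
  set M := (H ⊓ K).subgroupOf L with hM
  haveI : M.Normal := (Subgroup.Normal.subgroupOf inferInstance L : ((H ⊓ K).subgroupOf L).Normal)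
  refine @isNilpotent_of_ker_le_center _ _ _ _ (QuotientGroup.mk' M) ?_ ?_
  · rw [QuotientGroup.ker_mk']
    intro z hz
    rw [Subgroup.mem_subgroupOf] at hz
    rw [Subgroup.mem_center_iff]
    intro w
    have hle : L ≤ Subgroup.centralizer {(z : G)} := by
      refine sup_le ?_ ?_
      · intro h hh
        rw [Subgroup.mem_centralizer_singleton_iff]
        exact ((hH _ _ hz.1 hh).symm).eq
      · intro k hk
        rw [Subgroup.mem_centralizer_singleton_iff]
        exact ((hK _ _ hz.2 hk).symm).eq
    have h5 := Subgroup.mem_centralizer_singleton_iff.mp (hle w.2)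
    exact Subtype.ext (by push_cast; exact h5)
  · refine ⟨1, ?_⟩
    rw [upperCentralSeries_one, Subgroup.eq_top_iff']
    intro q
    rw [Subgroup.mem_center_iff]
    intro u
    refine QuotientGroup.induction_on q fun z => QuotientGroup.induction_on u fun w => ?_
    show QuotientGroup.mk (w * z) = QuotientGroup.mk (z * w)
    rw [QuotientGroup.eq]
    rw [Subgroup.mem_subgroupOf]
    have : ((w * z)⁻¹ * (z * w) : ↥L) = (z⁻¹ * w⁻¹ * z * w : ↥L) := by group
    rw [this]
    have hcoe : (((z⁻¹ * w⁻¹ * z * w : ↥L)) : G) = (z : G)⁻¹ * (w : G)⁻¹ * z * w := by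
      push_cast; rfl
    rw [hcoe]
    exact aux_commutator_mem H K hH hK z.2 w.2

lemma aux_fitting_comm [Finite G] (hA : IsAGroup G) :
    ∀ a b : G, a ∈ fitting G → b ∈ fitting G → Commute a b := by
  have core : ∀ H K : Subgroup G, (H.Normal ∧ Group.IsNilpotent ↥H) →
      (K.Normal ∧ Group.IsNilpotent ↥K) → ∀ a ∈ H, ∀ b ∈ K, Commute a b := by
    rintro H K ⟨hHn, hHnil⟩ ⟨hKn, hKnil⟩
    haveI := hHn; haveI := hKn
    have hHab : ∀ a b : G, a ∈ H → b ∈ H → Commute a b := fun a b ha hb =>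
      congrArg Subtype.val
        (aux_nilpotent_comm (aux_isAGroup_subgroup hA H) hHnil ⟨a, ha⟩ ⟨b, hb⟩)
    have hKab : ∀ a b : G, a ∈ K → b ∈ K → Commute a b := fun a b ha hb =>
      congrArg Subtype.val
        (aux_nilpotent_comm (aux_isAGroup_subgroup hA K) hKnil ⟨a, ha⟩ ⟨b, hb⟩)
    have hnil := aux_sup_nilpotent H K hHab hKab
    intro a ha b hb
    exact congrArg Subtype.val
      (aux_nilpotent_comm (aux_isAGroup_subgroup hA (H ⊔ K)) hnil
        ⟨a, le_sup_left (α := Subgroup G) (a := H) (b := K) ha⟩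
        ⟨b, le_sup_right (α := Subgroup G) (a := H) (b := K) hb⟩)
  have main : ∀ a ∈ fitting G, ∀ K : Subgroup G,
      (K.Normal ∧ Group.IsNilpotent ↥K) → ∀ k ∈ K, Commute a k := by
    intro a ha K hK k hk
    have hle : fitting G ≤ Subgroup.centralizer {k} := by
      rw [fitting]
      refine iSup_le fun H => iSup_le fun hH => ?_
      intro h hh
      rw [Subgroup.mem_centralizer_singleton_iff]
      exact (core H K hH hK h hh k hk).eq
    exact Subgroup.mem_centralizer_singleton_iff.mp (hle ha)
  intro a b ha hb
  have hle : fitting G ≤ Subgroup.centralizer {a} := by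
    rw [fitting]
    refine iSup_le fun K => iSup_le fun hK => ?_
    intro k hk
    rw [Subgroup.mem_centralizer_singleton_iff]
    exact (main a ha K hK k hk).symm.eq
  exact (Subgroup.mem_centralizer_singleton_iff.mp (hle hb)).symm

lemma aux_relindex_eq_index (H K : Subgroup G)
    (hmul : (H : Set G) * (K : Set G) = Set.univ) :
    H.relIndex K = H.index := by
  have hsurj : ∀ g : G, ∃ k : K, ((k : G) : G ⧸ H) = (g : G ⧸ H) := by
    intro g
    have : g⁻¹ ∈ (H : Set G) * (K : Set G) := by rw [hmul]; trivial
    obtain ⟨h, hh, k, hk, hgk⟩ := this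
    have hgk' : h * k = g⁻¹ := hgk
    refine ⟨⟨k⁻¹, K.inv_mem hk⟩, ?_⟩
    have hg : g = k⁻¹ * h⁻¹ := by
      rw [← mul_inv_rev, hgk', inv_inv]
    rw [hg]
    symm
    rw [QuotientGroup.eq]
    simpa using H.inv_mem hh
  let f : K ⧸ (H.subgroupOf K) → G ⧸ H :=
    Quotient.map' Subtype.val (fun a b hab => by
      rw [QuotientGroup.leftRel_apply] at hab ⊢
      simpa [Subgroup.mem_subgroupOf] using hab)
  have hfmk : ∀ k : K, f (QuotientGroup.mk k) = ((k : G) : G ⧸ H) := fun k => rfl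
  have hbij : Function.Bijective f := by
    constructor
    · intro a b
      refine QuotientGroup.induction_on a fun z => QuotientGroup.induction_on b fun w => ?_
      intro hzw
      rw [hfmk, hfmk] at hzw
      rw [QuotientGroup.eq] at hzw ⊢
      simpa [Subgroup.mem_subgroupOf] using hzw
    · intro a
      refine QuotientGroup.induction_on a fun g => ?_
      obtain ⟨k, hk⟩ := hsurj g
      exact ⟨QuotientGroup.mk k, by rw [hfmk, hk]⟩
  have := Nat.card_eq_of_bijective f hbij
  rw [Subgroup.relIndex, Subgroup.index, Subgroup.index, this]

lemma aux_index_inf (H K : Subgroup G)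
    (hmul : (H : Set G) * (K : Set G) = Set.univ) :
    (H ⊓ K).index = H.index * K.index := by
  have h1 : (H ⊓ K).relIndex K * K.index = (H ⊓ K).index :=
    Subgroup.relIndex_mul_index inf_le_right
  rw [← h1, Subgroup.inf_relIndex_right, aux_relindex_eq_index H K hmul]

lemma aux_conj_pow (g a : G) (n : ℕ) : (g * a * g⁻¹) ^ n = g * a ^ n * g⁻¹ := by
  induction n with
  | zero => simp
  | succ n ih => rw [pow_succ, pow_succ, ih]; group

def auxFq (G : Type*) [Group G] (q : ℕ)
    (hF : ∀ a b : G, a ∈ fitting G → b ∈ fitting G → Commute a b) : Subgroup G where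
  carrier := {g | g ∈ fitting G ∧ ∃ k : ℕ, g ^ q ^ k = 1}
  one_mem' := ⟨Subgroup.one_mem _, 0, one_pow _⟩
  mul_mem' := by
    rintro a b ⟨ha, ka, hka⟩ ⟨hb, kb, hkb⟩
    refine ⟨Subgroup.mul_mem _ ha hb, ka + kb, ?_⟩
    rw [(hF a b ha hb).mul_pow]
    have h1 : a ^ q ^ (ka + kb) = 1 := by
      rw [pow_add, pow_mul, hka, one_pow]
    have h2 : b ^ q ^ (ka + kb) = 1 := by
      rw [pow_add, mul_comm (q ^ ka), pow_mul, hkb, one_pow]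
    rw [h1, h2, one_mul]
  inv_mem' := by
    rintro a ⟨ha, k, hk⟩
    exact ⟨Subgroup.inv_mem _ ha, k, by rw [inv_pow, hk, inv_one]⟩

lemma mem_auxFq {q : ℕ} {hF : ∀ a b : G, a ∈ fitting G → b ∈ fitting G → Commute a b}
    {z : G} : z ∈ auxFq G q hF ↔ z ∈ fitting G ∧ ∃ k : ℕ, z ^ q ^ k = 1 := Iff.rfl

lemma auxFq_normal (q : ℕ) (hF : ∀ a b : G, a ∈ fitting G → b ∈ fitting G → Commute a b) :
    (auxFq G q hF).Normal := by
  constructor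
  rintro n ⟨hn, k, hk⟩ g
  exact ⟨(fitting_normal G).conj_mem n hn g, k, by rw [aux_conj_pow, hk, mul_one,
    mul_inv_cancel]⟩

lemma auxFq_pgroup (q : ℕ) (hF : ∀ a b : G, a ∈ fitting G → b ∈ fitting G → Commute a b) :
    IsPGroup q (auxFq G q hF) := by
  rintro ⟨g, hg, k, hk⟩
  exact ⟨k, Subtype.ext (by simpa using hk)⟩

lemma aux_zpowers_pgroup [Finite G] {q : ℕ} (hq : q.Prime) {w : G} {k : ℕ}
    (hw : w ^ q ^ k = 1) : IsPGroup q (Subgroup.zpowers w) := by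
  obtain ⟨e, _, hoc⟩ := (Nat.dvd_prime_pow hq).mp (orderOf_dvd_of_pow_eq_one hw)
  exact IsPGroup.of_card (by rw [Nat.card_zpowers, hoc])

lemma aux_qcent [Finite G] (hA : IsAGroup G)
    (hF : ∀ a b : G, a ∈ fitting G → b ∈ fitting G → Commute a b)
    {q : ℕ} (hq : q.Prime) {w : G} {k : ℕ} (hw : w ^ q ^ k = 1) {z : G}
    (hz : z ∈ auxFq G q hF) : Commute w z := by
  haveI := auxFq_normal q hF
  have hsup : IsPGroup q ↥(Subgroup.zpowers w ⊔ auxFq G q hF) :=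
    (aux_zpowers_pgroup hq hw).to_sup_of_normal_right (auxFq_pgroup q hF)
  exact aux_pgroup_comm hA hq hsup
    ((le_sup_left : Subgroup.zpowers w ≤ Subgroup.zpowers w ⊔ auxFq G q hF)
      (Subgroup.mem_zpowers w))
    ((le_sup_right : auxFq G q hF ≤ Subgroup.zpowers w ⊔ auxFq G q hF) hz)


end AuxLemmas

open scoped Pointwise in
/-- Let `G` be a finite `A`-group with `G = F ⋊ T` an internal semidirect
product, `F = F(G)` the Fitting subgroup. Let `x ∈ F` and `y ∈ T` with `xy = yx`. Then
`C_G(xy) = C_G(x) ∩ C_G(y)`; moreover, if `C_G(x)C_G(y) = G` then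
`Ind(G, xy) = Ind(G, x) · Ind(G, y)`. -/
theorem stmt_14 (G : Type*) [Group G] [Finite G] (hA : IsAGroup G)
    (T : Subgroup G) (hdisj : fitting G ⊓ T = ⊥)
    (hgen : (fitting G : Set G) * (T : Set G) = Set.univ)
    (x y : G) (hx : x ∈ fitting G) (hy : y ∈ T) (hxy : x * y = y * x) :
    Subgroup.centralizer {x * y} = Subgroup.centralizer {x} ⊓ Subgroup.centralizer {y} ∧
    ((Subgroup.centralizer {x} : Set G) * (Subgroup.centralizer {y} : Set G) = Set.univ →
      (Subgroup.centralizer {x * y}).index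
        = (Subgroup.centralizer {x}).index * (Subgroup.centralizer {y}).index) := by
  have hF : ∀ a b : G, a ∈ fitting G → b ∈ fitting G → Commute a b := aux_fitting_comm hA
  have hFn := fitting_normal G
  have uniq : ∀ f1 t1 f2 t2 : G, f1 ∈ fitting G → t1 ∈ T → f2 ∈ fitting G → t2 ∈ T →
      f1 * t1 = f2 * t2 → f1 = f2 ∧ t1 = t2 := by
    intro f1 t1 f2 t2 hf1 ht1 hf2 ht2 heq
    have h2 : f2⁻¹ * f1 = t2 * t1⁻¹ := by
      calc f2⁻¹ * f1 = f2⁻¹ * (f1 * t1) * t1⁻¹ := by group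
        _ = f2⁻¹ * (f2 * t2) * t1⁻¹ := by rw [heq]
        _ = t2 * t1⁻¹ := by group
    have hmem : f2⁻¹ * f1 ∈ fitting G ⊓ T :=
      ⟨Subgroup.mul_mem _ (Subgroup.inv_mem _ hf2) hf1,
        by rw [h2]; exact Subgroup.mul_mem _ ht2 (Subgroup.inv_mem _ ht1)⟩
    rw [hdisj, Subgroup.mem_bot] at hmem
    have ht : t2 * t1⁻¹ = 1 := by rw [← h2]; exact hmem
    exact ⟨(inv_mul_eq_one.mp hmem).symm, (mul_inv_eq_one.mp ht).symm⟩
  have forward : Subgroup.centralizer {x * y} ≤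
      Subgroup.centralizer {x} ⊓ Subgroup.centralizer {y} := by
    intro g hg
    rw [Subgroup.mem_centralizer_singleton_iff] at hg
    have hgm : g ∈ (fitting G : Set G) * (T : Set G) := by rw [hgen]; trivial
    obtain ⟨f, hf, t, ht, hft⟩ := hgm
    have hg' : f * t = g := hft
    have hxc : t * x * t⁻¹ ∈ fitting G := hFn.conj_mem x hx t
    have hyfc : y * f * y⁻¹ ∈ fitting G := hFn.conj_mem f hf y
    have hkey := uniq (f * (t * x * t⁻¹)) (t * y) (x * (y * f * y⁻¹)) (y * t)
      (Subgroup.mul_mem _ hf hxc) (Subgroup.mul_mem _ ht hy)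
      (Subgroup.mul_mem _ hx hyfc) (Subgroup.mul_mem _ hy ht)
      (by calc f * (t * x * t⁻¹) * (t * y) = (f * t) * (x * y) := by group
            _ = (x * y) * (f * t) := by rw [hg', hg]
            _ = x * (y * f * y⁻¹) * (y * t) := by group)
    obtain ⟨hFeq, hTeq⟩ := hkey
    -- hFeq : f * (t * x * t⁻¹) = x * (y * f * y⁻¹), hTeq : t * y = y * t
    set e := f⁻¹ * (y * f * y⁻¹) with hedef
    have heF : e ∈ fitting G := Subgroup.mul_mem _ (Subgroup.inv_mem _ hf) hyfc
    have he2 : e = x⁻¹ * (t * x * t⁻¹) := by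
      have h0 : f⁻¹ * (x⁻¹ * (x * (y * f * y⁻¹))) = e := by rw [hedef]; group
      rw [← h0, ← hFeq]
      have hc1 : x * f = f * x := hF x f hx hf
      calc f⁻¹ * (x⁻¹ * (f * (t * x * t⁻¹))) = ((x * f)⁻¹ * f) * (t * x * t⁻¹) := by group
        _ = ((f * x)⁻¹ * f) * (t * x * t⁻¹) := by rw [hc1]
        _ = x⁻¹ * (t * x * t⁻¹) := by group
    have cyx : Commute y x := (show Commute x y from hxy).symm
    have cyt : Commute y t := (show Commute t y from hTeq).symm
    have hey : y * e = e * y := by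
      have k1 : y * x⁻¹ * y⁻¹ = x⁻¹ := by rw [cyx.inv_right.eq]; group
      have k2 : y * t * y⁻¹ = t := by rw [cyt.eq]; group
      have k3 : y * x * y⁻¹ = x := by rw [cyx.eq]; group
      have k4 : y * t⁻¹ * y⁻¹ = t⁻¹ := by rw [cyt.inv_right.eq]; group
      calc y * e = (y * x⁻¹ * y⁻¹) * (y * t * y⁻¹) * (y * x * y⁻¹) * (y * t⁻¹ * y⁻¹) * y := by
            rw [he2]; group
        _ = x⁻¹ * t * x * t⁻¹ * y := by rw [k1, k2, k3, k4]
        _ = e * y := by rw [he2]; group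
    have horder : ∀ q : ℕ, q.Prime → ¬ q ∣ orderOf e := by
      intro q hq hdvd
      obtain ⟨f1, f2, hfe, ⟨i, hfi⟩, ⟨j, hfj⟩, hf1, hf2⟩ := aux_split f hq
      obtain ⟨y1, y2, hye, ⟨i2, hy1i⟩, ⟨j2, hy2j⟩, hy1, hy2⟩ := aux_split y hq
      have hf0 : orderOf f ≠ 0 := (orderOf_pos f).ne'
      have hy0 : orderOf y ≠ 0 := (orderOf_pos y).ne'
      set mf := orderOf f / q ^ (orderOf f).factorization q with hmfdef
      set my := orderOf y / q ^ (orderOf y).factorization q with hmydef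
      have hqmf : ¬ q ∣ mf := hq.coprime_iff_not_dvd.mp (Nat.coprime_ordCompl hq hf0)
      have hqmy : ¬ q ∣ my := hq.coprime_iff_not_dvd.mp (Nat.coprime_ordCompl hq hy0)
      have hf1F : f1 ∈ fitting G := by rw [hfi]; exact Subgroup.pow_mem _ hf i
      have hf2F : f2 ∈ fitting G := by rw [hfj]; exact Subgroup.pow_mem _ hf j
      have hf1Fq : f1 ∈ auxFq G q hF := ⟨hf1F, _, hf1⟩
      haveI hFqn := auxFq_normal q hF
      set e1 := f1⁻¹ * (y * f1 * y⁻¹) with he1def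
      set e2 := f2⁻¹ * (y * f2 * y⁻¹) with he2def
      have hyf1F : y * f1 * y⁻¹ ∈ fitting G := hFn.conj_mem f1 hf1F y
      have hyf2F : y * f2 * y⁻¹ ∈ fitting G := hFn.conj_mem f2 hf2F y
      have he1F : e1 ∈ fitting G := Subgroup.mul_mem _ (Subgroup.inv_mem _ hf1F) hyf1F
      have he2F : e2 ∈ fitting G := Subgroup.mul_mem _ (Subgroup.inv_mem _ hf2F) hyf2F
      have he1Fq : e1 ∈ auxFq G q hF :=
        Subgroup.mul_mem _ (Subgroup.inv_mem _ hf1Fq) (hFqn.conj_mem f1 hf1Fq y)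
      have hee : e = e1 * e2 := by
        have hca : f2⁻¹ * e1 = e1 * f2⁻¹ :=
          (hF _ _ (Subgroup.inv_mem _ hf2F) he1F).eq
        calc e = f2⁻¹ * e1 * (y * f2 * y⁻¹) := by rw [hedef, he1def, hfe]; group
          _ = e1 * (f2⁻¹ * (y * f2 * y⁻¹)) := by rw [hca, mul_assoc]
          _ = e1 * e2 := by rw [he2def]
      have he2pow : e2 ^ mf = 1 := by
        have hcm : Commute f2⁻¹ (y * f2 * y⁻¹) := hF _ _ (Subgroup.inv_mem _ hf2F) hyf2F
        rw [he2def, hcm.mul_pow, inv_pow, aux_conj_pow, hf2, inv_one, one_mul, mul_one,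
          mul_inv_cancel]
      -- e1 is centralized by y
      have hyee : y * e * y⁻¹ = e := by rw [hey]; group
      have he1y : y * e1 * y⁻¹ = e1 := by
        set A1 := y * e1 * y⁻¹ with hA1def
        set A2 := y * e2 * y⁻¹ with hA2def
        have hA1Fq : A1 ∈ auxFq G q hF := hFqn.conj_mem e1 he1Fq y
        have hA1F : A1 ∈ fitting G := hFn.conj_mem e1 he1F y
        have hA2F : A2 ∈ fitting G := hFn.conj_mem e2 he2F y
        have hA2pow : A2 ^ mf = 1 := by
          rw [hA2def, aux_conj_pow, he2pow, mul_one, mul_inv_cancel]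
        have hprod : A1 * A2 = e1 * e2 := by
          calc A1 * A2 = y * (e1 * e2) * y⁻¹ := by rw [hA1def, hA2def]; group
            _ = y * e * y⁻¹ := by rw [← hee]
            _ = e1 * e2 := by rw [hyee, hee]
        set d := e1⁻¹ * A1 with hddef
        have hd2 : d = e2 * A2⁻¹ := by
          calc d = e1⁻¹ * (A1 * A2) * A2⁻¹ := by rw [hddef]; group
            _ = e1⁻¹ * (e1 * e2) * A2⁻¹ := by rw [hprod]
            _ = e2 * A2⁻¹ := by group
        have hdFq : d ∈ auxFq G q hF :=
          Subgroup.mul_mem _ (Subgroup.inv_mem _ he1Fq) hA1Fq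
        obtain ⟨kd, hkd⟩ := hdFq.2
        have hdmf : d ^ mf = 1 := by
          have hcm : Commute e2 A2⁻¹ := hF _ _ he2F (Subgroup.inv_mem _ hA2F)
          rw [hd2, hcm.mul_pow, he2pow, one_mul, inv_pow, hA2pow, inv_one]
        have hd1 : d = 1 := aux_coprime_eq_one hkd hdmf
          (Nat.Coprime.pow_left kd (Nat.coprime_ordCompl hq hf0))
        have h9 : e1⁻¹ * A1 = 1 := by rw [← hddef]; exact hd1
        exact (inv_mul_eq_one.mp h9).symm
      have hy2c : y2 * e1 * y2⁻¹ = e1 := by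
        have hcy1 : Commute y1 e1 := aux_qcent hA hF hq hy1 he1Fq
        have hy2eq : y2 = y1⁻¹ * y := by rw [hye]; group
        calc y2 * e1 * y2⁻¹ = y1⁻¹ * (y * e1 * y⁻¹) * y1 := by rw [hy2eq]; group
          _ = y1⁻¹ * e1 * y1 := by rw [he1y]
          _ = e1 := by rw [hcy1.inv_left.eq]; group
      have he1form : e1 = f1⁻¹ * (y2 * f1 * y2⁻¹) := by
        have hmemc : y2 * f1 * y2⁻¹ ∈ auxFq G q hF := hFqn.conj_mem f1 hf1Fq y2
        have hcy1 : Commute y1 (y2 * f1 * y2⁻¹) := aux_qcent hA hF hq hy1 hmemc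
        have hsplit : y * f1 * y⁻¹ = y1 * (y2 * f1 * y2⁻¹) * y1⁻¹ := by rw [hye]; group
        rw [he1def, hsplit, hcy1.eq]
        group
      have hce1y2 : y2 * e1 = e1 * y2 := by
        calc y2 * e1 = (y2 * e1 * y2⁻¹) * y2 := by group
          _ = e1 * y2 := by rw [hy2c]
      have hnorm1 : e1 ^ orderOf y2 = 1 := aux_norm hce1y2 he1form
      obtain ⟨k1, hk1⟩ := he1Fq.2
      have hy2ord : orderOf y2 ∣ my := orderOf_dvd_of_pow_eq_one hy2
      have hcop : Nat.Coprime (q ^ k1) (orderOf y2) := by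
        apply Nat.Coprime.pow_left
        refine hq.coprime_iff_not_dvd.mpr fun hqd => hqmy (hqd.trans hy2ord)
      have he1one : e1 = 1 := aux_coprime_eq_one hk1 hnorm1 hcop
      have hemf : e ^ mf = 1 := by rw [hee, he1one, one_mul]; exact he2pow
      exact hqmf (hdvd.trans (orderOf_dvd_of_pow_eq_one hemf))
    have he1 : e = 1 := by
      have h1 : orderOf e = 1 := by
        by_contra h
        exact horder _ (Nat.minFac_prime h) (Nat.minFac_dvd _)
      exact orderOf_eq_one_iff.mp h1
    have htx : t * x * t⁻¹ = x := by
      have := he2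
      rw [he1] at this
      have h3 : t * x * t⁻¹ = x * 1 := by rw [this]; group
      rw [mul_one] at h3; exact h3
    have hyf : y * f * y⁻¹ = f := by
      have := hedef
      rw [he1] at this
      have h3 : y * f * y⁻¹ = f * 1 := by rw [this]; group
      rw [mul_one] at h3; exact h3
    have hxt : t * x = x * t := by
      calc t * x = (t * x * t⁻¹) * t := by group
        _ = x * t := by rw [htx]
    have hyf' : y * f = f * y := by
      calc y * f = (y * f * y⁻¹) * y := by group
        _ = f * y := by rw [hyf]
    have hxf : x * f = f * x := hF x f hx hf
    rw [Subgroup.mem_inf]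
    constructor
    · rw [Subgroup.mem_centralizer_singleton_iff, ← hg']
      calc f * t * x = f * x * t := by rw [mul_assoc, hxt, mul_assoc]
        _ = x * (f * t) := by rw [← hxf]; group
    · rw [Subgroup.mem_centralizer_singleton_iff, ← hg']
      calc f * t * y = f * y * t := by rw [mul_assoc, hTeq, mul_assoc]
        _ = y * (f * t) := by rw [← hyf']; group
  have backward : Subgroup.centralizer {x} ⊓ Subgroup.centralizer {y} ≤
      Subgroup.centralizer {x * y} := by
    intro g hg
    rw [Subgroup.mem_inf] at hg
    obtain ⟨hgx, hgy⟩ := hg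
    rw [Subgroup.mem_centralizer_singleton_iff] at hgx hgy ⊢
    calc g * (x * y) = (g * x) * y := by group
      _ = x * (g * y) := by rw [hgx]; group
      _ = x * y * g := by rw [hgy]; group
  have hset : Subgroup.centralizer {x * y} =
      Subgroup.centralizer {x} ⊓ Subgroup.centralizer {y} := le_antisymm forward backward
  exact ⟨hset, fun hmul => by rw [hset, aux_index_inf _ _ hmul]⟩
end
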